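/- arXiv:1910.06775 — 6 statements merged into one kernel-verified Lean document; each statement's English description precedes it below -/
import Mathlib

section
/- For any bounded linear operator T on a complex Hilbert space, w(T)^2 ≤ (1/4)‖ |T|² + |T*|² ‖ + (1/2) w(T²), where w denotes the numerical radius, |T| = (T*T)^{1/2}, and ‖·‖ the operator norm. -/
/-- The numerical radius of an operator on a complex Hilbert space. -/
noncomputable def nr {H : Type*} [NormedAddCommGroup H] [InnerProductSpace ℂ H]
    (T : H →L[ℂ] H) : ℝ :=
  sSup {r : ℝ | ∃ x : H, ‖x‖ = 1 ∧ r = ‖(inner ℂ (T x) x : ℂ)‖}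

/-- `|T| = (T*T)^{1/2}` via the continuous functional calculus. -/
noncomputable def absOp {H : Type*} [NormedAddCommGroup H] [InnerProductSpace ℂ H]
    [CompleteSpace H] (X : H →L[ℂ] H) : H →L[ℂ] H :=
  cfc Real.sqrt (star X * X)

section aux

variable {H : Type*} [NormedAddCommGroup H] [InnerProductSpace ℂ H]

local notation "⟪" x ", " y "⟫" => @inner ℂ H _ x y

/-- Buzano's inequality. -/
lemma buzano (a b e : H) (he : ‖e‖ = 1) :
    ‖⟪a, e⟫ * ⟪e, b⟫‖ ≤ (‖a‖ * ‖b‖ + ‖⟪a, b⟫‖) / 2 := by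
  set α : ℂ := ⟪e, a⟫ with hα
  set a' : H := ((2 : ℂ) * α) • e - a with ha'
  have hre : RCLike.re ⟪((2 : ℂ) * α) • e, a⟫ = 2 * ‖α‖ ^ 2 := by
    rw [inner_smul_left, ← hα, map_mul (starRingEnd ℂ) (2:ℂ) α, mul_assoc, RCLike.conj_mul]
    simp [← Complex.ofReal_pow]
  have hnorm : ‖a'‖ = ‖a‖ := by
    have h1 : ‖a'‖ ^ 2 = ‖a‖ ^ 2 := by
      rw [ha', @norm_sub_sq ℂ, hre, norm_smul, norm_mul, Complex.norm_ofNat, he]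
      ring
    nlinarith [norm_nonneg a', norm_nonneg a]
  have hkey : ⟪a, e⟫ * ⟪e, b⟫ = (⟪a', b⟫ + ⟪a, b⟫) / 2 := by
    rw [ha', inner_sub_left, inner_smul_left, map_mul, hα, inner_conj_symm,
      Complex.conj_ofNat]
    ring
  rw [hkey]
  calc ‖(⟪a', b⟫ + ⟪a, b⟫) / 2‖ ≤ (‖⟪a', b⟫‖ + ‖⟪a, b⟫‖) / 2 := by
        rw [norm_div]
        simp only [Complex.norm_ofNat]
        gcongr
        exact norm_add_le _ _
    _ ≤ (‖a‖ * ‖b‖ + ‖⟪a, b⟫‖) / 2 := by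
        gcongr
        calc ‖⟪a', b⟫‖ ≤ ‖a'‖ * ‖b‖ := norm_inner_le_norm _ _
          _ = ‖a‖ * ‖b‖ := by rw [hnorm]

lemma nr_bddAbove (T : H →L[ℂ] H) :
    BddAbove {r : ℝ | ∃ x : H, ‖x‖ = 1 ∧ r = ‖(inner ℂ (T x) x : ℂ)‖} := by
  refine ⟨‖T‖, ?_⟩
  rintro r ⟨x, hx, rfl⟩
  calc ‖⟪T x, x⟫‖ ≤ ‖T x‖ * ‖x‖ := norm_inner_le_norm _ _
    _ ≤ ‖T‖ * ‖x‖ * ‖x‖ := by gcongr; exact T.le_opNorm x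
    _ = ‖T‖ := by rw [hx]; ring

lemma nr_nonneg (T : H →L[ℂ] H) : 0 ≤ nr T :=
  Real.sSup_nonneg (by rintro r ⟨x, hx, rfl⟩; positivity)

lemma le_nr (T : H →L[ℂ] H) {x : H} (hx : ‖x‖ = 1) : ‖⟪T x, x⟫‖ ≤ nr T :=
  le_csSup (nr_bddAbove T) ⟨x, hx, rfl⟩

variable [CompleteSpace H]

lemma absOp_sq (X : H →L[ℂ] H) : absOp X ^ 2 = star X * X := by
  have h0 : (0 : H →L[ℂ] H) ≤ star X * X := star_mul_self_nonneg X
  have hsa : IsSelfAdjoint (star X * X) := IsSelfAdjoint.star_mul_self X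
  rw [absOp, ← cfc_pow Real.sqrt 2 (star X * X)]
  have : cfc (fun t : ℝ => Real.sqrt t ^ 2) (star X * X) = cfc (id : ℝ → ℝ) (star X * X) :=
    cfc_congr fun t ht => Real.sq_sqrt (spectrum_nonneg_of_nonneg h0 ht)
  rw [this, cfc_id ℝ (star X * X)]

lemma key_ineq (T : H →L[ℂ] H) {x : H} (hx : ‖x‖ = 1) :
    ‖⟪T x, x⟫‖ ^ 2 ≤
      (1/4) * ‖absOp T ^ 2 + absOp (star T) ^ 2‖ + (1/2) * nr (T * T) := by
  set A : H →L[ℂ] H := absOp T ^ 2 + absOp (star T) ^ 2 with hA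
  have hA' : A = star T * T + T * star T := by
    rw [hA, absOp_sq, absOp_sq, star_star]
  -- ⟪A x, x⟫ = ‖T x‖² + ‖T⋆ x‖²
  have hTx : ⟪(star T) (T x), x⟫ = (‖T x‖ : ℂ) ^ 2 := by
    rw [ContinuousLinearMap.star_eq_adjoint, ContinuousLinearMap.adjoint_inner_left,
      inner_self_eq_norm_sq_to_K]
    norm_cast
  have hTstarx : ⟪T ((star T) x), x⟫ = (‖(star T) x‖ : ℂ) ^ 2 := by
    rw [ContinuousLinearMap.star_eq_adjoint, ← ContinuousLinearMap.adjoint_inner_right,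
      inner_self_eq_norm_sq_to_K]
    norm_cast
  have hAxx : ⟪A x, x⟫ = ((‖T x‖ ^ 2 + ‖(star T) x‖ ^ 2 : ℝ) : ℂ) := by
    rw [hA']
    simp only [ContinuousLinearMap.add_apply, ContinuousLinearMap.mul_apply, inner_add_left,
      hTx, hTstarx]
    push_cast
    ring
  have hnormA : ‖T x‖ ^ 2 + ‖(star T) x‖ ^ 2 ≤ ‖A‖ := by
    have h1 : ‖⟪A x, x⟫‖ ≤ ‖A‖ := by
      calc ‖⟪A x, x⟫‖ ≤ ‖A x‖ * ‖x‖ := norm_inner_le_norm _ _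
        _ ≤ ‖A‖ * ‖x‖ * ‖x‖ := by gcongr; exact A.le_opNorm x
        _ = ‖A‖ := by rw [hx]; ring
    rw [hAxx] at h1
    rwa [Complex.norm_real, Real.norm_of_nonneg (by positivity)] at h1
  -- Buzano with a = T x, b = T⋆ x, e = x
  have hbuz := buzano (T x) ((star T) x) x hx
  have h2 : ⟪x, (star T) x⟫ = ⟪T x, x⟫ := by
    rw [ContinuousLinearMap.star_eq_adjoint, ContinuousLinearMap.adjoint_inner_right]
  have h3 : ⟪T x, (star T) x⟫ = ⟪(T * T) x, x⟫ := by
    rw [ContinuousLinearMap.star_eq_adjoint, ContinuousLinearMap.adjoint_inner_right]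
    rfl
  rw [h2, h3] at hbuz
  have h4 : ‖⟪T x, x⟫ * ⟪T x, x⟫‖ = ‖⟪T x, x⟫‖ ^ 2 := by
    rw [norm_mul]; ring
  rw [h4] at hbuz
  have h5 : ‖⟪(T * T) x, x⟫‖ ≤ nr (T * T) := le_nr (T * T) hx
  have h6 : ‖T x‖ * ‖(star T) x‖ ≤ (‖T x‖ ^ 2 + ‖(star T) x‖ ^ 2) / 2 := by
    nlinarith [sq_nonneg (‖T x‖ - ‖(star T) x‖)]
  linarith

end aux

/-- `w(T)² ≤ (1/4)‖|T|² + |T*|²‖ + (1/2)w(T²)`. -/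
theorem nr_sq_le {H : Type*} [NormedAddCommGroup H] [InnerProductSpace ℂ H]
    [CompleteSpace H] (T : H →L[ℂ] H) :
    nr T ^ 2 ≤ (1/4) * ‖absOp T ^ 2 + absOp (star T) ^ 2‖ + (1/2) * nr (T * T) := by
  set R : ℝ := (1/4) * ‖absOp T ^ 2 + absOp (star T) ^ 2‖ + (1/2) * nr (T * T) with hR
  have hR0 : 0 ≤ R := by
    have := nr_nonneg (T * T)
    have := norm_nonneg (absOp T ^ 2 + absOp (star T) ^ 2)
    rw [hR]; positivity
  have hle : nr T ≤ Real.sqrt R := by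
    apply Real.sSup_le _ (Real.sqrt_nonneg R)
    rintro r ⟨x, hx, rfl⟩
    have h := key_ineq T hx
    rw [← hR] at h
    have : ‖(inner ℂ (T x) x : ℂ)‖ = Real.sqrt (‖(inner ℂ (T x) x : ℂ)‖ ^ 2) := by
      rw [Real.sqrt_sq (norm_nonneg _)]
    rw [this]
    exact Real.sqrt_le_sqrt h
  calc nr T ^ 2 ≤ Real.sqrt R ^ 2 := by
        have := nr_nonneg T
        gcongr
    _ = R := Real.sq_sqrt hR0
end

section
/- (Buzano's inequality) For all vectors a, b, x in a complex Hilbert space, |⟨a,x⟩⟨x,b⟩| ≤ ((‖a‖‖b‖ + |⟨a,b⟩|)/2) · ‖x‖². -/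
/-- Buzano's inequality: `|⟨a,x⟩⟨x,b⟩| ≤ ((‖a‖‖b‖ + |⟨a,b⟩|)/2)‖x‖²`. -/
theorem buzano_inequality {H : Type*} [NormedAddCommGroup H] [InnerProductSpace ℂ H]
    (a b x : H) :
    ‖(inner ℂ a x : ℂ) * (inner ℂ x b : ℂ)‖ ≤
      (‖a‖ * ‖b‖ + ‖(inner ℂ a b : ℂ)‖) / 2 * ‖x‖ ^ 2 := by
  set c : ℂ := inner ℂ x b with hc
  set v : H := ((2:ℂ)*c) • x - ((‖x‖^2 : ℝ) : ℂ) • b with hv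
  have key : (inner ℂ a v : ℂ) = 2*c*(inner ℂ a x : ℂ) - (‖x‖^2 : ℝ) * (inner ℂ a b : ℂ) := by
    simp [hv, inner_sub_right, inner_smul_right]
  have hcs : ‖c‖^2 = RCLike.re (starRingEnd ℂ c * c) := by
    rw [RCLike.conj_mul]; norm_cast
  have hnv : ‖v‖^2 = (‖x‖^2 * ‖b‖)^2 := by
    have := @norm_sub_sq ℂ _ _ _ _ (((2:ℂ)*c) • x) (((‖x‖^2 : ℝ) : ℂ) • b)
    rw [← hv] at this
    rw [this, inner_smul_left, inner_smul_right, norm_smul, norm_smul, ← hc]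
    simp only [map_mul, map_ofNat, RCLike.conj_ofNat]
    have h2 : RCLike.re ((2:ℂ) * starRingEnd ℂ c * (((‖x‖^2:ℝ):ℂ) * c))
        = 2 * ‖x‖^2 * ‖c‖^2 := by
      rw [hcs]
      have : (2:ℂ) * starRingEnd ℂ c * (((‖x‖^2:ℝ):ℂ) * c)
          = ((2 * ‖x‖^2 : ℝ) : ℂ) * (starRingEnd ℂ c * c) := by push_cast; ring
      rw [this]
      simp only [RCLike.re_to_complex, Complex.re_ofReal_mul]
    rw [h2]
    simp [norm_mul, mul_pow]
    ring
  have hnv' : ‖v‖ = ‖x‖^2 * ‖b‖ := by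
    have h1 : 0 ≤ ‖x‖^2 * ‖b‖ := by positivity
    nlinarith [norm_nonneg v]
  have cauchy := norm_inner_le_norm (𝕜 := ℂ) a v
  rw [key, hnv'] at cauchy
  have tri : ‖(2:ℂ)*c*(inner ℂ a x : ℂ)‖ ≤
      ‖2*c*(inner ℂ a x : ℂ) - (‖x‖^2 : ℝ) * (inner ℂ a b : ℂ)‖
      + ‖((‖x‖^2 : ℝ) : ℂ) * (inner ℂ a b : ℂ)‖ := by
    calc ‖(2:ℂ)*c*(inner ℂ a x : ℂ)‖
        = ‖(2*c*(inner ℂ a x : ℂ) - (‖x‖^2 : ℝ) * (inner ℂ a b : ℂ)) + ((‖x‖^2:ℝ):ℂ) * (inner ℂ a b : ℂ)‖ := by ring_nf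
      _ ≤ _ := norm_add_le _ _
  have hle : 2 * ‖(inner ℂ a x : ℂ) * c‖ ≤ ‖a‖ * (‖x‖^2 * ‖b‖) + ‖x‖^2 * ‖(inner ℂ a b : ℂ)‖ := by
    have e1 : ‖(2:ℂ)*c*(inner ℂ a x : ℂ)‖ = 2 * ‖(inner ℂ a x : ℂ) * c‖ := by
      simp [norm_mul]; ring
    have e2 : ‖((‖x‖^2 : ℝ) : ℂ) * (inner ℂ a b : ℂ)‖ = ‖x‖^2 * ‖(inner ℂ a b : ℂ)‖ := by
      simp [norm_mul, abs_of_nonneg (sq_nonneg ‖x‖)]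
    rw [e1, e2] at tri
    linarith
  nlinarith [hle]
end

section
/- Let T = (T_{ij}) be an n×n operator matrix with entries T_{ij} ∈ B(H), acting on the direct sum of n copies of H. Then w(T) ≤ w(T'), where T' is the n×n complex matrix with entries t'_{ij} = ‖T_{ij}‖. -/
lemma nr_set_le {H : Type*} [NormedAddCommGroup H] [InnerProductSpace ℂ H]
    (T : H →L[ℂ] H) : ∀ r ∈ {r : ℝ | ∃ x : H, ‖x‖ = 1 ∧ r = ‖(inner ℂ (T x) x : ℂ)‖},
    r ≤ ‖T‖ := by
  rintro r ⟨x, hx, rfl⟩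
  calc ‖(inner ℂ (T x) x : ℂ)‖ ≤ ‖T x‖ * ‖x‖ := norm_inner_le_norm _ _
    _ ≤ ‖T‖ * ‖x‖ * ‖x‖ := by gcongr; exact T.le_opNorm x
    _ = ‖T‖ := by rw [hx]; ring

/-- If `T` is the `n × n` operator matrix with entries `M i j`, acting on `⊕ⁿ H`,
then `w(T) ≤ w((‖M i j‖))`. -/
theorem nr_le_nr_norm_matrix (n : ℕ) {H : Type*} [NormedAddCommGroup H]
    [InnerProductSpace ℂ H] (M : Fin n → Fin n → (H →L[ℂ] H))
    (T : (PiLp 2 fun _ : Fin n => H) →L[ℂ] (PiLp 2 fun _ : Fin n => H))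
    (hT : ∀ x, ∀ i, T x i = ∑ j, M i j (x j)) :
    nr T ≤ nr (Matrix.toEuclideanCLM (𝕜 := ℂ) (Matrix.of fun i j => (‖M i j‖ : ℂ))) := by
  set A := Matrix.toEuclideanCLM (𝕜 := ℂ) (Matrix.of fun i j => (‖M i j‖ : ℂ)) with hA
  have hbdd : BddAbove {r : ℝ | ∃ x : EuclideanSpace ℂ (Fin n), ‖x‖ = 1 ∧
      r = ‖(inner ℂ (A x) x : ℂ)‖} := ⟨‖A‖, nr_set_le A⟩
  have hApp : ∀ (u : EuclideanSpace ℂ (Fin n)) (i : Fin n),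
      A u i = ∑ j, (‖M i j‖ : ℂ) * u j := by
    intro u i
    have h2 := congrFun (Matrix.ofLp_toEuclideanCLM
      (Matrix.of fun i j => (‖M i j‖ : ℂ)) u) i
    exact h2.trans (by simp [Matrix.mulVec, dotProduct])
  apply Real.sSup_le
  · rintro r ⟨x, hx, rfl⟩
    set u : EuclideanSpace ℂ (Fin n) := WithLp.toLp 2 (fun i => (‖x i‖ : ℂ)) with hu
    set S : ℝ := ∑ i, ∑ j, ‖M i j‖ * ‖x j‖ * ‖x i‖ with hS
    have hnu : ‖u‖ = 1 := by
      have h1 : ‖u‖ = Real.sqrt (∑ i, ‖x i‖ ^ 2) := by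
        rw [EuclideanSpace.norm_eq]
        congr 1
        refine Finset.sum_congr rfl fun i _ => ?_
        simp [hu]
      have h2 : ‖x‖ = Real.sqrt (∑ i, ‖x i‖ ^ 2) := by
        rw [PiLp.norm_eq_sum (p := 2) (by norm_num), Real.sqrt_eq_rpow]
        norm_num
      rw [h1, ← h2, hx]
    have hAuu : (inner ℂ (A u) u : ℂ) = (S : ℂ) := by
      calc (inner ℂ (A u) u : ℂ) = ∑ i, (starRingEnd ℂ) (A u i) * u i := by
            rw [PiLp.inner_apply]
            refine Finset.sum_congr rfl fun i _ => ?_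
            rw [RCLike.inner_apply]; ring
        _ = ∑ i, ∑ j, ((‖M i j‖ * ‖x j‖ * ‖x i‖ : ℝ) : ℂ) := by
            refine Finset.sum_congr rfl fun i _ => ?_
            rw [hApp, map_sum, Finset.sum_mul]
            refine Finset.sum_congr rfl fun j _ => ?_
            simp only [hu]
            push_cast
            rw [← Complex.ofReal_mul, Complex.conj_ofReal]
        _ = (S : ℂ) := by rw [hS]; push_cast; rfl
    have hSnonneg : 0 ≤ S := by
      rw [hS]; positivity
    have hAuunorm : ‖(inner ℂ (A u) u : ℂ)‖ = S := by
      rw [hAuu, Complex.norm_real, Real.norm_of_nonneg hSnonneg]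
    have hbound : ‖(inner ℂ (T x) x : ℂ)‖ ≤ S := by
      have hTx : (inner ℂ (T x) x : ℂ) = ∑ i, ∑ j, (inner ℂ (M i j (x j)) (x i) : ℂ) := by
        rw [PiLp.inner_apply]
        refine Finset.sum_congr rfl fun i _ => ?_
        rw [hT x i, sum_inner]
      rw [hTx, hS]
      calc ‖∑ i, ∑ j, (inner ℂ (M i j (x j)) (x i) : ℂ)‖
          ≤ ∑ i, ∑ j, ‖(inner ℂ (M i j (x j)) (x i) : ℂ)‖ := by
            refine (norm_sum_le _ _).trans ?_
            exact Finset.sum_le_sum fun i _ => norm_sum_le _ _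
        _ ≤ ∑ i, ∑ j, ‖M i j‖ * ‖x j‖ * ‖x i‖ := by
            refine Finset.sum_le_sum fun i _ => Finset.sum_le_sum fun j _ => ?_
            calc ‖(inner ℂ (M i j (x j)) (x i) : ℂ)‖ ≤ ‖M i j (x j)‖ * ‖x i‖ :=
                  norm_inner_le_norm _ _
              _ ≤ ‖M i j‖ * ‖x j‖ * ‖x i‖ := by gcongr; exact (M i j).le_opNorm _
    refine hbound.trans ?_
    rw [← hAuunorm]
    exact le_csSup hbdd ⟨u, hnu, rfl⟩
  · exact Real.sSup_nonneg fun r hr => by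
      obtain ⟨x, hx, rfl⟩ := hr; positivity
end

section
/- Let A > 0 be strictly positive on a complex Hilbert space H, B = diag(A,A) on H ⊕ H, and T₁₂, T₂₁ ∈ B(H) admit A-adjoints. For T = [[0, T₁₂],[T₂₁, 0]]: (1/2)max{w_A(T₁₂+T₂₁), w_A(T₁₂−T₂₁)} ≤ w_B(T) ≤ (1/2)(w_A(T₁₂+T₂₁) + w_A(T₁₂−T₂₁)). -/
open scoped ComplexOrder

/-- The A-numerical radius: `w_A(T) = sup{|⟨ATx,x⟩| : ⟨Ax,x⟩ = 1}` (with the paper's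
convention `⟨u,v⟩ = inner v u` in Mathlib's notation). -/
noncomputable def wA {H : Type*} [NormedAddCommGroup H] [InnerProductSpace ℂ H]
    (A T : H →L[ℂ] H) : ℝ :=
  sSup {r : ℝ | ∃ x : H, (inner ℂ x (A x) : ℂ) = 1 ∧ r = ‖(inner ℂ x (A (T x)) : ℂ)‖}

/-- The A-Crawford number: `m_A(T) = inf{|⟨ATx,x⟩| : ⟨Ax,x⟩ = 1}`. -/
noncomputable def mA {H : Type*} [NormedAddCommGroup H] [InnerProductSpace ℂ H]
    (A T : H →L[ℂ] H) : ℝ :=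
  sInf {r : ℝ | ∃ x : H, (inner ℂ x (A x) : ℂ) = 1 ∧ r = ‖(inner ℂ x (A (T x)) : ℂ)‖}

/-- The A-operator seminorm: `‖T‖_A = sup{‖Tx‖_A/‖x‖_A : x ∈ closure (range A), x ≠ 0}`. -/
noncomputable def normA {H : Type*} [NormedAddCommGroup H] [InnerProductSpace ℂ H]
    (A T : H →L[ℂ] H) : ℝ :=
  sSup {r : ℝ | ∃ x ∈ closure (Set.range A), x ≠ 0 ∧
    r = Real.sqrt ((inner ℂ (T x) (A (T x)) : ℂ)).re / Real.sqrt ((inner ℂ x (A x) : ℂ)).re}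

section Aux

variable {K : Type*} [NormedAddCommGroup K] [InnerProductSpace ℂ K]

lemma cs_ineq (A' : K →L[ℂ] K)
    (hsym : ∀ x y : K, (inner ℂ (A' x) y : ℂ) = inner ℂ x (A' y))
    (hpos : ∀ x : K, 0 ≤ (inner ℂ x (A' x) : ℂ).re) (x y : K) :
    ‖(inner ℂ x (A' y) : ℂ)‖ ≤
      Real.sqrt ((inner ℂ x (A' x) : ℂ).re) * Real.sqrt ((inner ℂ y (A' y) : ℂ).re) := by
  let core : PreInnerProductSpace.Core ℂ K :=
  { inner := fun a b => (inner ℂ a (A' b) : ℂ)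
    conj_inner_symm := by
      intro a b
      calc (starRingEnd ℂ) (inner ℂ b (A' a) : ℂ) = inner ℂ (A' a) b := by rw [inner_conj_symm]
      _ = inner ℂ a (A' b) := hsym a b
    re_inner_nonneg := fun a => hpos a
    add_left := fun a b c => by simp [inner_add_left]
    smul_left := fun a b r => by simp [inner_smul_left, mul_comm] }
  have h := InnerProductSpace.Core.inner_mul_inner_self_le (𝕜 := ℂ) (F := K) (c := core) x y
  have h' : ‖(inner ℂ x (A' y) : ℂ)‖ * ‖(inner ℂ y (A' x) : ℂ)‖ ≤
      (inner ℂ x (A' x) : ℂ).re * (inner ℂ y (A' y) : ℂ).re := h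
  have hnorm : ‖(inner ℂ y (A' x) : ℂ)‖ = ‖(inner ℂ x (A' y) : ℂ)‖ := by
    rw [← inner_conj_symm y (A' x), hsym]
    exact RCLike.norm_conj _
  rw [hnorm] at h'
  have h2 : ‖(inner ℂ x (A' y) : ℂ)‖ ^ 2 ≤ (inner ℂ x (A' x) : ℂ).re * (inner ℂ y (A' y) : ℂ).re := by
    rw [sq]; exact h'
  calc ‖(inner ℂ x (A' y) : ℂ)‖ = Real.sqrt (‖(inner ℂ x (A' y) : ℂ)‖ ^ 2) :=
        (Real.sqrt_sq (norm_nonneg _)).symm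
  _ ≤ Real.sqrt ((inner ℂ x (A' x) : ℂ).re * (inner ℂ y (A' y) : ℂ).re) := Real.sqrt_le_sqrt h2
  _ = _ := Real.sqrt_mul (hpos x) _

lemma abound [CompleteSpace K] (A' T' Ts' : K →L[ℂ] K)
    (hsym : ∀ x y : K, (inner ℂ (A' x) y : ℂ) = inner ℂ x (A' y))
    (hpos : ∀ x : K, 0 ≤ (inner ℂ x (A' x) : ℂ).re)
    (hTs : A'.comp Ts' = (ContinuousLinearMap.adjoint T').comp A') (x : K) :
    Real.sqrt ((inner ℂ (T' x) (A' (T' x)) : ℂ).re) ≤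
      Real.sqrt ‖Ts'.comp T'‖ * Real.sqrt ((inner ℂ x (A' x) : ℂ).re) := by
  set Q : K →L[ℂ] K := Ts'.comp T' with hQdef
  set φ : K → ℝ := fun a => Real.sqrt ((inner ℂ a (A' a) : ℂ).re) with hφdef
  have hφnn : ∀ a : K, 0 ≤ φ a := fun a => Real.sqrt_nonneg _
  have hφsq : ∀ a : K, φ a * φ a = (inner ℂ a (A' a) : ℂ).re :=
    fun a => Real.mul_self_sqrt (hpos a)
  have hcs : ∀ a b : K, ‖(inner ℂ a (A' b) : ℂ)‖ ≤ φ a * φ b := fun a b =>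
    cs_ineq A' hsym hpos a b
  have hATs : ∀ a : K, A' (Ts' a) = (ContinuousLinearMap.adjoint T') (A' a) := fun a =>
    DFunLike.congr_fun hTs a
  have key : ∀ a b : K, (inner ℂ a (A' (Q b)) : ℂ) = inner ℂ (T' a) (A' (T' b)) := by
    intro a b
    have h1 : A' (Q b) = (ContinuousLinearMap.adjoint T') (A' (T' b)) := hATs (T' b)
    rw [h1, ContinuousLinearMap.adjoint_inner_right]
  have q1 : ∀ a b : K, (inner ℂ a (A' (Q b)) : ℂ) = inner ℂ (Q a) (A' b) := by
    intro a b
    have h2 : (inner ℂ (A' (Q a)) b : ℂ) = inner ℂ (A' (T' a)) (T' b) := by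
      rw [show A' (Q a) = (ContinuousLinearMap.adjoint T') (A' (T' a)) from hATs (T' a),
        ContinuousLinearMap.adjoint_inner_left]
    rw [key a b, ← hsym (T' a) (T' b), ← h2, hsym]
  have q2 : ∀ (n : ℕ) (a b : K), (inner ℂ a (A' ((Q ^ n) b)) : ℂ) = inner ℂ ((Q ^ n) a) (A' b) := by
    intro n
    induction n with
    | zero => intro a b; simp
    | succ n ih =>
      intro a b
      rw [pow_succ, ContinuousLinearMap.mul_apply, ih a (Q b), q1, ← ContinuousLinearMap.mul_apply,
        ← pow_succ', pow_succ]
  have q3 : ∀ (k : ℕ) (a : K), φ ((Q ^ k) a) * φ ((Q ^ k) a) ≤ φ a * φ ((Q ^ (2 * k)) a) := by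
    intro k a
    rw [hφsq]
    have e1 : (inner ℂ ((Q ^ k) a) (A' ((Q ^ k) a)) : ℂ) = inner ℂ a (A' ((Q ^ (2 * k)) a)) := by
      rw [← q2 k a ((Q ^ k) a), two_mul, pow_add, ContinuousLinearMap.mul_apply]
    rw [e1]
    exact le_trans (Complex.re_le_norm _) (hcs a _)
  have q4 : ∀ (n : ℕ), φ (Q x) ^ (2 ^ n) * φ x ≤ φ x ^ (2 ^ n) * φ ((Q ^ (2 ^ n)) x) := by
    intro n
    induction n with
    | zero => simp [mul_comm]
    | succ n ih =>
      by_cases hz : φ x = 0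
      · rw [hz, mul_zero]
        exact mul_nonneg (pow_nonneg le_rfl _) (hφnn _)
      · have hpx : 0 < φ x := lt_of_le_of_ne (hφnn x) (Ne.symm hz)
        have h2 := q3 (2 ^ n) x
        have e2 : 2 * 2 ^ n = 2 ^ (n + 1) := (pow_succ' 2 n).symm
        rw [e2] at h2
        have hsq' : ∀ (c : ℝ), c ^ (2 ^ (n + 1)) = (c ^ (2 ^ n)) * (c ^ (2 ^ n)) := by
          intro c; rw [← pow_add]; congr 1; rw [pow_succ]; ring
        rw [hsq' (φ (Q x)), hsq' (φ x)]
        have e3 : (φ (Q x) ^ 2 ^ n * φ x) * (φ (Q x) ^ 2 ^ n * φ x) ≤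
            (φ x ^ 2 ^ n * φ ((Q ^ 2 ^ n) x)) * (φ x ^ 2 ^ n * φ ((Q ^ 2 ^ n) x)) :=
          mul_le_mul ih ih (mul_nonneg (pow_nonneg (hφnn _) _) (hφnn x)) (le_trans
            (mul_nonneg (pow_nonneg (hφnn _) _) (hφnn x)) ih)
        have e4 : (φ x ^ 2 ^ n * φ x ^ 2 ^ n) * (φ ((Q ^ 2 ^ n) x) * φ ((Q ^ 2 ^ n) x)) ≤
            (φ x ^ 2 ^ n * φ x ^ 2 ^ n) * (φ x * φ ((Q ^ (2 ^ (n + 1))) x)) :=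
          mul_le_mul_of_nonneg_left h2 (mul_nonneg (pow_nonneg (hφnn _) _)
            (pow_nonneg (hφnn _) _))
        have e5 : (φ (Q x) ^ 2 ^ n * φ (Q x) ^ 2 ^ n) * φ x * φ x ≤
            (φ x ^ 2 ^ n * φ x ^ 2 ^ n) * (φ x * φ ((Q ^ (2 ^ (n + 1))) x)) := by
          nlinarith [e3, e4]
        have := (mul_le_mul_iff_of_pos_right hpx).mp (by linarith [e5] :
          ((φ (Q x) ^ 2 ^ n * φ (Q x) ^ 2 ^ n) * φ x) * φ x ≤
          ((φ x ^ 2 ^ n * φ x ^ 2 ^ n) * φ ((Q ^ (2 ^ (n + 1))) x)) * φ x)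
        linarith [this]
  have q5 : ∀ a : K, φ a ≤ Real.sqrt ‖A'‖ * ‖a‖ := by
    intro a
    have h1 : (inner ℂ a (A' a) : ℂ).re ≤ ‖A'‖ * (‖a‖ * ‖a‖) := by
      calc (inner ℂ a (A' a) : ℂ).re ≤ ‖(inner ℂ a (A' a) : ℂ)‖ := Complex.re_le_norm _
      _ ≤ ‖a‖ * ‖A' a‖ := norm_inner_le_norm _ _
      _ ≤ ‖a‖ * (‖A'‖ * ‖a‖) :=
        mul_le_mul_of_nonneg_left (A'.le_opNorm a) (norm_nonneg a)
      _ = ‖A'‖ * (‖a‖ * ‖a‖) := by ring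
    calc φ a ≤ Real.sqrt (‖A'‖ * (‖a‖ * ‖a‖)) := Real.sqrt_le_sqrt h1
    _ = Real.sqrt ‖A'‖ * Real.sqrt (‖a‖ * ‖a‖) := Real.sqrt_mul (norm_nonneg _) _
    _ = Real.sqrt ‖A'‖ * ‖a‖ := by rw [Real.sqrt_mul_self (norm_nonneg a)]
  have q6 : φ (Q x) ≤ ‖Q‖ * φ x := by
    by_contra hcon
    push_neg at hcon
    have hφx0 : φ x ≠ 0 := by
      intro h0
      have h3 := q3 1 x
      rw [pow_one, h0, zero_mul] at h3
      have : φ (Q x) = 0 := by nlinarith [hφnn (Q x), h3]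
      rw [this, h0, mul_zero] at hcon
      exact lt_irrefl 0 hcon
    have hpx : 0 < φ x := lt_of_le_of_ne (hφnn x) (Ne.symm hφx0)
    have hQpos : 0 < ‖Q‖ := by
      rcases eq_or_lt_of_le (norm_nonneg Q) with h0 | h0
      · exfalso
        have hq0 : Q = 0 := by
          rw [← norm_eq_zero]; exact h0.symm
        rw [hq0] at hcon
        simp only [ContinuousLinearMap.zero_apply, norm_zero, zero_mul] at hcon
        have : φ (0 : K) = 0 := by simp [hφdef]
        rw [this] at hcon
        nlinarith [hcon, hpx]
      · exact h0
    set r : ℝ := φ (Q x) / (‖Q‖ * φ x) with hrdef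
    have hr : 1 < r := (one_lt_div (by positivity)).2 hcon
    obtain ⟨n, hn⟩ := pow_unbounded_of_one_lt (Real.sqrt ‖A'‖ * ‖x‖ / φ x) hr
    have h5 : φ ((Q ^ (2 ^ n)) x) ≤ Real.sqrt ‖A'‖ * (‖Q‖ ^ (2 ^ n) * ‖x‖) := by
      calc φ ((Q ^ (2 ^ n)) x) ≤ Real.sqrt ‖A'‖ * ‖(Q ^ (2 ^ n)) x‖ := q5 _
      _ ≤ Real.sqrt ‖A'‖ * (‖Q ^ (2 ^ n)‖ * ‖x‖) :=
        mul_le_mul_of_nonneg_left ((Q ^ (2 ^ n)).le_opNorm x) (Real.sqrt_nonneg _)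
      _ ≤ Real.sqrt ‖A'‖ * (‖Q‖ ^ (2 ^ n) * ‖x‖) := by
        have := norm_pow_le' Q (pow_pos (by norm_num : (0:ℕ) < 2) n)
        exact mul_le_mul_of_nonneg_left
          (mul_le_mul_of_nonneg_right this (norm_nonneg x)) (Real.sqrt_nonneg _)
    have h6 : r ^ (2 ^ n) ≤ Real.sqrt ‖A'‖ * ‖x‖ / φ x := by
      rw [hrdef, div_pow, div_le_div_iff₀ (by positivity) hpx, mul_pow]
      calc φ (Q x) ^ 2 ^ n * φ x ≤ φ x ^ 2 ^ n * φ ((Q ^ (2 ^ n)) x) := q4 n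
      _ ≤ φ x ^ 2 ^ n * (Real.sqrt ‖A'‖ * (‖Q‖ ^ (2 ^ n) * ‖x‖)) :=
        mul_le_mul_of_nonneg_left h5 (pow_nonneg (hφnn x) _)
      _ = Real.sqrt ‖A'‖ * ‖x‖ * (‖Q‖ ^ 2 ^ n * φ x ^ 2 ^ n) := by ring
    have h7 : r ^ n ≤ r ^ (2 ^ n) := pow_le_pow_right₀ hr.le (Nat.lt_two_pow_self (n := n)).le
    linarith
  have h7 : (inner ℂ (T' x) (A' (T' x)) : ℂ).re ≤ ‖Q‖ * (inner ℂ x (A' x) : ℂ).re := by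
    rw [← key x x]
    calc (inner ℂ x (A' (Q x)) : ℂ).re ≤ ‖(inner ℂ x (A' (Q x)) : ℂ)‖ := Complex.re_le_norm _
    _ ≤ φ x * φ (Q x) := hcs x (Q x)
    _ ≤ φ x * (‖Q‖ * φ x) := mul_le_mul_of_nonneg_left q6 (hφnn x)
    _ = ‖Q‖ * (φ x * φ x) := by ring
    _ = ‖Q‖ * (inner ℂ x (A' x) : ℂ).re := by rw [hφsq]
  calc Real.sqrt ((inner ℂ (T' x) (A' (T' x)) : ℂ).re) ≤
      Real.sqrt (‖Q‖ * (inner ℂ x (A' x) : ℂ).re) := Real.sqrt_le_sqrt h7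
  _ = Real.sqrt ‖Q‖ * Real.sqrt ((inner ℂ x (A' x) : ℂ).re) := Real.sqrt_mul (norm_nonneg _) _

lemma wA_nonneg (A' C : K →L[ℂ] K) : 0 ≤ wA A' C :=
  Real.sSup_nonneg fun r hr => by obtain ⟨x, -, rfl⟩ := hr; exact norm_nonneg _

lemma wA_pointwise (A' C : K →L[ℂ] K)
    (hre : ∀ x : K, (inner ℂ x (A' x) : ℂ) = (((inner ℂ x (A' x) : ℂ).re : ℝ) : ℂ))
    (hpos : ∀ x : K, 0 ≤ (inner ℂ x (A' x) : ℂ).re)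
    {M : ℝ} (hbd : ∀ x : K, ‖(inner ℂ x (A' (C x)) : ℂ)‖ ≤ M * (inner ℂ x (A' x) : ℂ).re)
    (x : K) : ‖(inner ℂ x (A' (C x)) : ℂ)‖ ≤ wA A' C * (inner ℂ x (A' x) : ℂ).re := by
  have hbdd : BddAbove {r : ℝ | ∃ x : K, (inner ℂ x (A' x) : ℂ) = 1 ∧
      r = ‖(inner ℂ x (A' (C x)) : ℂ)‖} := by
    refine ⟨M, ?_⟩
    rintro r ⟨a, ha1, rfl⟩
    have hre1 : (inner ℂ a (A' a) : ℂ).re = 1 := by rw [ha1]; simp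
    have := hbd a
    rw [hre1, mul_one] at this
    exact this
  rcases eq_or_lt_of_le (hpos x) with h0 | hq
  · have h1 : ‖(inner ℂ x (A' (C x)) : ℂ)‖ ≤ 0 := by
      have := hbd x; rw [← h0, mul_zero] at this; exact this
    calc ‖(inner ℂ x (A' (C x)) : ℂ)‖ ≤ 0 := h1
    _ = wA A' C * (inner ℂ x (A' x) : ℂ).re := by rw [← h0, mul_zero]
  · set q : ℝ := (inner ℂ x (A' x) : ℂ).re with hqdef
    set c : ℂ := (((Real.sqrt q)⁻¹ : ℝ) : ℂ) with hcdef
    have hsq : Real.sqrt q * Real.sqrt q = q := Real.mul_self_sqrt hq.le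
    have hcc : (starRingEnd ℂ) c * c = ((q⁻¹ : ℝ) : ℂ) := by
      rw [hcdef, Complex.conj_ofReal, ← Complex.ofReal_mul, ← mul_inv, hsq]
    have hx'1 : (inner ℂ (c • x) (A' (c • x)) : ℂ) = 1 := by
      rw [map_smul, inner_smul_left, inner_smul_right, ← mul_assoc, hcc, hre x, ← hqdef,
        ← Complex.ofReal_mul, inv_mul_cancel₀ hq.ne']
      norm_num
    have hval : (inner ℂ (c • x) (A' (C (c • x))) : ℂ) = ((q⁻¹ : ℝ) : ℂ) *
        (inner ℂ x (A' (C x)) : ℂ) := by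
      rw [map_smul, map_smul, inner_smul_left, inner_smul_right, ← mul_assoc, hcc]
    have hmem : ‖(inner ℂ (c • x) (A' (C (c • x))) : ℂ)‖ ∈ {r : ℝ | ∃ x : K,
        (inner ℂ x (A' x) : ℂ) = 1 ∧ r = ‖(inner ℂ x (A' (C x)) : ℂ)‖} := ⟨c • x, hx'1, rfl⟩
    have hle : ‖(inner ℂ (c • x) (A' (C (c • x))) : ℂ)‖ ≤ wA A' C := le_csSup hbdd hmem
    rw [hval, norm_mul, Complex.norm_real, Real.norm_eq_abs,
      abs_of_nonneg (inv_nonneg.mpr hq.le)] at hle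
    calc ‖(inner ℂ x (A' (C x)) : ℂ)‖ = q * (q⁻¹ * ‖(inner ℂ x (A' (C x)) : ℂ)‖) := by
          field_simp
    _ ≤ q * wA A' C := mul_le_mul_of_nonneg_left hle hq.le
    _ = wA A' C * q := mul_comm _ _

end Aux

/-- For `A > 0`, `B = diag(A,A)` and `T = [[0,T₁₂],[T₂₁,0]]` on `H ⊕ H`:
`(1/2)max{w_A(T₁₂+T₂₁), w_A(T₁₂−T₂₁)} ≤ w_B(T) ≤ (1/2)(w_A(T₁₂+T₂₁) + w_A(T₁₂−T₂₁))`. -/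
theorem wB_offdiag_bounds {H : Type*} [NormedAddCommGroup H] [InnerProductSpace ℂ H]
    [CompleteSpace H] (A T12 T21 T12s T21s : H →L[ℂ] H)
    (hA : ∀ x : H, x ≠ 0 → 0 < (inner ℂ x (A x) : ℂ))
    (hT12s : A.comp T12s = (ContinuousLinearMap.adjoint T12).comp A)
    (hT21s : A.comp T21s = (ContinuousLinearMap.adjoint T21).comp A)
    (B T : (PiLp 2 fun _ : Fin 2 => H) →L[ℂ] (PiLp 2 fun _ : Fin 2 => H))
    (hB : ∀ x i, B x i = A (x i))
    (hT : ∀ x, T x 0 = T12 (x 1) ∧ T x 1 = T21 (x 0)) :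
    (1/2) * max (wA A (T12 + T21)) (wA A (T12 - T21)) ≤ wA B T ∧
    wA B T ≤ (1/2) * (wA A (T12 + T21) + wA A (T12 - T21)) := by
  have hreA : ∀ x : H, (inner ℂ x (A x) : ℂ) = (((inner ℂ x (A x) : ℂ).re : ℝ) : ℂ) := by
    intro x
    by_cases hx : x = 0
    · simp [hx]
    · obtain ⟨h1, h2⟩ := Complex.lt_def.mp (hA x hx)
      have him : (inner ℂ x (A x) : ℂ).im = 0 := by simpa using h2.symm
      apply Complex.ext <;> simp [him]
  have hposA : ∀ x : H, 0 ≤ (inner ℂ x (A x) : ℂ).re := by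
    intro x
    by_cases hx : x = 0
    · simp [hx]
    · obtain ⟨h1, h2⟩ := Complex.lt_def.mp (hA x hx)
      simpa using h1.le
  have hsymA : ∀ x y : H, (inner ℂ (A x) y : ℂ) = inner ℂ x (A y) := by
    have h1 : ∀ v : H, (starRingEnd ℂ) (inner ℂ (A v) v : ℂ) = (inner ℂ (A v) v : ℂ) := by
      intro v
      have e1 : (inner ℂ (A v) v : ℂ) = (((inner ℂ v (A v) : ℂ).re : ℝ) : ℂ) := by
        rw [← inner_conj_symm, hreA v, Complex.conj_ofReal]
        simp
      rw [e1, Complex.conj_ofReal]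
    have h2 : (↑A : H →ₗ[ℂ] H).IsSymmetric :=
      (LinearMap.isSymmetric_iff_inner_map_self_real _).mpr (fun v => by simpa using h1 v)
    intro x y
    exact h2 x y
  have hinB : ∀ z w : PiLp 2 fun _ : Fin 2 => H, (inner ℂ z (B w) : ℂ) =
      inner ℂ (z 0) (A (w 0)) + inner ℂ (z 1) (A (w 1)) := by
    intro z w
    rw [PiLp.inner_apply, Fin.sum_univ_two, hB w 0, hB w 1]
  have hinBT : ∀ z : PiLp 2 fun _ : Fin 2 => H, (inner ℂ z (B (T z)) : ℂ) =
      inner ℂ (z 0) (A (T12 (z 1))) + inner ℂ (z 1) (A (T21 (z 0))) := by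
    intro z
    rw [hinB z (T z), (hT z).1, (hT z).2]
  have hreB : ∀ z : PiLp 2 fun _ : Fin 2 => H,
      (inner ℂ z (B z) : ℂ) = (((inner ℂ z (B z) : ℂ).re : ℝ) : ℂ) := by
    intro z
    have e : (inner ℂ z (B z) : ℂ) = (((inner ℂ (z 0) (A (z 0)) : ℂ).re +
        (inner ℂ (z 1) (A (z 1)) : ℂ).re : ℝ) : ℂ) := by
      rw [hinB z z, hreA (z 0), hreA (z 1)]
      simp
    rw [e]
    simp
  have hposB : ∀ z : PiLp 2 fun _ : Fin 2 => H, 0 ≤ (inner ℂ z (B z) : ℂ).re := by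
    intro z
    have e := congrArg Complex.re (hinB z z)
    rw [Complex.add_re] at e
    rw [e]
    exact add_nonneg (hposA _) (hposA _)
  have hcs : ∀ a b : H, ‖(inner ℂ a (A b) : ℂ)‖ ≤
      Real.sqrt ((inner ℂ a (A a) : ℂ).re) * Real.sqrt ((inner ℂ b (A b) : ℂ).re) :=
    fun a b => cs_ineq A hsymA hposA a b
  set c12 : ℝ := Real.sqrt ‖T12s.comp T12‖ with hc12def
  set c21 : ℝ := Real.sqrt ‖T21s.comp T21‖ with hc21def
  have hc12nn : 0 ≤ c12 := Real.sqrt_nonneg _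
  have hc21nn : 0 ≤ c21 := Real.sqrt_nonneg _
  have hb12 : ∀ x : H, Real.sqrt ((inner ℂ (T12 x) (A (T12 x)) : ℂ).re) ≤
      c12 * Real.sqrt ((inner ℂ x (A x) : ℂ).re) :=
    fun x => abound A T12 T12s hsymA hposA hT12s x
  have hb21 : ∀ x : H, Real.sqrt ((inner ℂ (T21 x) (A (T21 x)) : ℂ).re) ≤
      c21 * Real.sqrt ((inner ℂ x (A x) : ℂ).re) :=
    fun x => abound A T21 T21s hsymA hposA hT21s x
  have hbdS : ∀ x : H, ‖(inner ℂ x (A ((T12 + T21) x)) : ℂ)‖ ≤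
      (c12 + c21) * (inner ℂ x (A x) : ℂ).re := by
    intro x
    have e : (inner ℂ x (A ((T12 + T21) x)) : ℂ) = inner ℂ x (A (T12 x)) + inner ℂ x (A (T21 x)) := by
      simp [ContinuousLinearMap.add_apply, inner_add_right]
    rw [e]
    calc ‖(inner ℂ x (A (T12 x)) : ℂ) + inner ℂ x (A (T21 x))‖
        ≤ ‖(inner ℂ x (A (T12 x)) : ℂ)‖ + ‖(inner ℂ x (A (T21 x)) : ℂ)‖ := norm_add_le _ _
    _ ≤ Real.sqrt ((inner ℂ x (A x) : ℂ).re) * Real.sqrt ((inner ℂ (T12 x) (A (T12 x)) : ℂ).re)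
        + Real.sqrt ((inner ℂ x (A x) : ℂ).re) * Real.sqrt ((inner ℂ (T21 x) (A (T21 x)) : ℂ).re) :=
        add_le_add (hcs x (T12 x)) (hcs x (T21 x))
    _ ≤ Real.sqrt ((inner ℂ x (A x) : ℂ).re) * (c12 * Real.sqrt ((inner ℂ x (A x) : ℂ).re))
        + Real.sqrt ((inner ℂ x (A x) : ℂ).re) * (c21 * Real.sqrt ((inner ℂ x (A x) : ℂ).re)) :=
        add_le_add (mul_le_mul_of_nonneg_left (hb12 x) (Real.sqrt_nonneg _))
          (mul_le_mul_of_nonneg_left (hb21 x) (Real.sqrt_nonneg _))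
    _ = (c12 + c21) * (Real.sqrt ((inner ℂ x (A x) : ℂ).re) *
        Real.sqrt ((inner ℂ x (A x) : ℂ).re)) := by ring
    _ = (c12 + c21) * (inner ℂ x (A x) : ℂ).re := by rw [Real.mul_self_sqrt (hposA x)]
  have hbdD : ∀ x : H, ‖(inner ℂ x (A ((T12 - T21) x)) : ℂ)‖ ≤
      (c12 + c21) * (inner ℂ x (A x) : ℂ).re := by
    intro x
    have e : (inner ℂ x (A ((T12 - T21) x)) : ℂ) = inner ℂ x (A (T12 x)) - inner ℂ x (A (T21 x)) := by
      simp [ContinuousLinearMap.sub_apply, inner_sub_right]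
    rw [e]
    calc ‖(inner ℂ x (A (T12 x)) : ℂ) - inner ℂ x (A (T21 x))‖
        ≤ ‖(inner ℂ x (A (T12 x)) : ℂ)‖ + ‖(inner ℂ x (A (T21 x)) : ℂ)‖ := norm_sub_le _ _
    _ ≤ Real.sqrt ((inner ℂ x (A x) : ℂ).re) * Real.sqrt ((inner ℂ (T12 x) (A (T12 x)) : ℂ).re)
        + Real.sqrt ((inner ℂ x (A x) : ℂ).re) * Real.sqrt ((inner ℂ (T21 x) (A (T21 x)) : ℂ).re) :=
        add_le_add (hcs x (T12 x)) (hcs x (T21 x))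
    _ ≤ Real.sqrt ((inner ℂ x (A x) : ℂ).re) * (c12 * Real.sqrt ((inner ℂ x (A x) : ℂ).re))
        + Real.sqrt ((inner ℂ x (A x) : ℂ).re) * (c21 * Real.sqrt ((inner ℂ x (A x) : ℂ).re)) :=
        add_le_add (mul_le_mul_of_nonneg_left (hb12 x) (Real.sqrt_nonneg _))
          (mul_le_mul_of_nonneg_left (hb21 x) (Real.sqrt_nonneg _))
    _ = (c12 + c21) * (Real.sqrt ((inner ℂ x (A x) : ℂ).re) *
        Real.sqrt ((inner ℂ x (A x) : ℂ).re)) := by ring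
    _ = (c12 + c21) * (inner ℂ x (A x) : ℂ).re := by rw [Real.mul_self_sqrt (hposA x)]
  have hbdB : ∀ z : PiLp 2 fun _ : Fin 2 => H, ‖(inner ℂ z (B (T z)) : ℂ)‖ ≤
      (c12 + c21) * (inner ℂ z (B z) : ℂ).re := by
    intro z
    have hq : (inner ℂ z (B z) : ℂ).re = (inner ℂ (z 0) (A (z 0)) : ℂ).re +
        (inner ℂ (z 1) (A (z 1)) : ℂ).re := by
      rw [hinB z z, Complex.add_re]
    rw [hinBT z, hq]
    have h2 := hcs (z 0) (T12 (z 1))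
    have h3 := hcs (z 1) (T21 (z 0))
    have h4 := hb12 (z 1)
    have h5 := hb21 (z 0)
    have hp0 := Real.sqrt_nonneg ((inner ℂ (z 0) (A (z 0)) : ℂ).re)
    have hp1 := Real.sqrt_nonneg ((inner ℂ (z 1) (A (z 1)) : ℂ).re)
    have hq0 := Real.mul_self_sqrt (hposA (z 0))
    have hq1 := Real.mul_self_sqrt (hposA (z 1))
    calc ‖(inner ℂ (z 0) (A (T12 (z 1))) : ℂ) + inner ℂ (z 1) (A (T21 (z 0)))‖
        ≤ ‖(inner ℂ (z 0) (A (T12 (z 1))) : ℂ)‖ + ‖(inner ℂ (z 1) (A (T21 (z 0))) : ℂ)‖ :=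
        norm_add_le _ _
    _ ≤ Real.sqrt ((inner ℂ (z 0) (A (z 0)) : ℂ).re) *
          Real.sqrt ((inner ℂ (T12 (z 1)) (A (T12 (z 1))) : ℂ).re)
        + Real.sqrt ((inner ℂ (z 1) (A (z 1)) : ℂ).re) *
          Real.sqrt ((inner ℂ (T21 (z 0)) (A (T21 (z 0))) : ℂ).re) := add_le_add h2 h3
    _ ≤ Real.sqrt ((inner ℂ (z 0) (A (z 0)) : ℂ).re) *
          (c12 * Real.sqrt ((inner ℂ (z 1) (A (z 1)) : ℂ).re))
        + Real.sqrt ((inner ℂ (z 1) (A (z 1)) : ℂ).re) *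
          (c21 * Real.sqrt ((inner ℂ (z 0) (A (z 0)) : ℂ).re)) :=
        add_le_add (mul_le_mul_of_nonneg_left h4 hp0) (mul_le_mul_of_nonneg_left h5 hp1)
    _ ≤ (c12 + c21) * ((inner ℂ (z 0) (A (z 0)) : ℂ).re + (inner ℂ (z 1) (A (z 1)) : ℂ).re) := by
        nlinarith [sq_nonneg (Real.sqrt ((inner ℂ (z 0) (A (z 0)) : ℂ).re) -
          Real.sqrt ((inner ℂ (z 1) (A (z 1)) : ℂ).re))]
  have hptS := wA_pointwise A (T12 + T21) hreA hposA hbdS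
  have hptD := wA_pointwise A (T12 - T21) hreA hposA hbdD
  have hptB := wA_pointwise B T hreB hposB hbdB
  have hwS0 : 0 ≤ wA A (T12 + T21) := wA_nonneg _ _
  have hwD0 : 0 ≤ wA A (T12 - T21) := wA_nonneg _ _
  have hwB0 : 0 ≤ wA B T := wA_nonneg _ _
  have hS2 : wA A (T12 + T21) ≤ 2 * wA B T := by
    apply Real.sSup_le _ (by linarith)
    rintro r ⟨x, hx1, rfl⟩
    have hx1re : (inner ℂ x (A x) : ℂ).re = 1 := by rw [hx1]; simp
    set z : PiLp 2 fun _ : Fin 2 => H := (WithLp.equiv 2 (∀ _ : Fin 2, H)).symm ![x, x] with hz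
    have hz0 : z 0 = x := rfl
    have hz1 : z 1 = x := rfl
    have hqz : (inner ℂ z (B z) : ℂ).re = 2 := by
      have e := congrArg Complex.re (hinB z z)
      rw [Complex.add_re, hz0, hz1, hx1re] at e
      rw [e]
      norm_num
    have hval : (inner ℂ z (B (T z)) : ℂ) = inner ℂ x (A ((T12 + T21) x)) := by
      rw [hinBT z, hz0, hz1]
      simp [ContinuousLinearMap.add_apply, inner_add_right]
    have h := hptB z
    rw [hval, hqz] at h
    linarith
  have hD2 : wA A (T12 - T21) ≤ 2 * wA B T := by
    apply Real.sSup_le _ (by linarith)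
    rintro r ⟨x, hx1, rfl⟩
    have hx1re : (inner ℂ x (A x) : ℂ).re = 1 := by rw [hx1]; simp
    set z : PiLp 2 fun _ : Fin 2 => H :=
      (WithLp.equiv 2 (∀ _ : Fin 2, H)).symm ![x, Complex.I • x] with hz
    have hz0 : z 0 = x := rfl
    have hz1 : z 1 = Complex.I • x := rfl
    have hIx : (inner ℂ (Complex.I • x) (A (Complex.I • x)) : ℂ) = inner ℂ x (A x) := by
      rw [map_smul, inner_smul_left, inner_smul_right, ← mul_assoc, Complex.conj_I]
      ring_nf
      simp only [Complex.I_sq]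
      ring
    have hqz : (inner ℂ z (B z) : ℂ).re = 2 := by
      have e := congrArg Complex.re (hinB z z)
      rw [Complex.add_re, hz0, hz1, hIx, hx1re] at e
      rw [e]
      norm_num
    have hval : (inner ℂ z (B (T z)) : ℂ) = Complex.I * inner ℂ x (A ((T12 - T21) x)) := by
      rw [hinBT z, hz0, hz1]
      simp only [map_smul, inner_smul_left, inner_smul_right,
        ContinuousLinearMap.sub_apply, map_sub, inner_sub_right, Complex.conj_I]
      ring
    have h := hptB z
    rw [hval, hqz, norm_mul, Complex.norm_I, one_mul] at h
    linarith
  constructor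
  · have hmax := max_le hS2 hD2
    linarith [hmax]
  · apply Real.sSup_le _ (by linarith)
    rintro r ⟨z, hz1, rfl⟩
    have hsum : (inner ℂ (z 0) (A (z 0)) : ℂ).re + (inner ℂ (z 1) (A (z 1)) : ℂ).re = 1 := by
      simpa [Complex.add_re] using congrArg Complex.re ((hinB z z).symm.trans hz1)
    set x : H := z 0 with hxdef
    set y : H := z 1 with hydef
    have hid : (4 : ℂ) * (inner ℂ z (B (T z)) : ℂ) =
        ((inner ℂ (x + y) (A ((T12 + T21) (x + y))) : ℂ) -
          inner ℂ (x - y) (A ((T12 + T21) (x - y)))) -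
        Complex.I * ((inner ℂ (x + Complex.I • y) (A ((T12 - T21) (x + Complex.I • y))) : ℂ) -
          inner ℂ (x - Complex.I • y) (A ((T12 - T21) (x - Complex.I • y)))) := by
      rw [hinBT z]
      simp only [ContinuousLinearMap.add_apply, ContinuousLinearMap.sub_apply, map_add,
        map_sub, map_smul, inner_add_left, inner_add_right, inner_sub_left, inner_sub_right,
        inner_smul_left, inner_smul_right, Complex.conj_I]
      ring_nf
      simp only [Complex.I_sq]
      ring
    have hsum1 : (inner ℂ (x + y) (A (x + y)) : ℂ) + (inner ℂ (x - y) (A (x - y)) : ℂ) =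
        2 * ((inner ℂ x (A x) : ℂ) + inner ℂ y (A y)) := by
      simp only [map_add, map_sub, inner_add_left, inner_add_right, inner_sub_left,
        inner_sub_right]
      ring
    have hsum2 : (inner ℂ (x + Complex.I • y) (A (x + Complex.I • y)) : ℂ) +
        (inner ℂ (x - Complex.I • y) (A (x - Complex.I • y)) : ℂ) =
        2 * ((inner ℂ x (A x) : ℂ) + inner ℂ y (A y)) := by
      simp only [map_add, map_sub, map_smul, inner_add_left, inner_add_right, inner_sub_left,
        inner_sub_right, inner_smul_left, inner_smul_right, Complex.conj_I]
      ring_nf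
      simp only [Complex.I_sq]
      ring
    have hcast : ((2 : ℂ) * ((inner ℂ x (A x) : ℂ) + inner ℂ y (A y))).re = 2 := by
      rw [hreA x, hreA y]
      have e : ((2 : ℂ) * ((((inner ℂ x (A x) : ℂ).re : ℝ) : ℂ) +
          (((inner ℂ y (A y) : ℂ).re : ℝ) : ℂ))) =
          ((2 * ((inner ℂ x (A x) : ℂ).re + (inner ℂ y (A y) : ℂ).re) : ℝ) : ℂ) := by
        push_cast
        ring
      rw [e, Complex.ofReal_re, hsum]
      norm_num
    have hre1 : (inner ℂ (x + y) (A (x + y)) : ℂ).re +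
        (inner ℂ (x - y) (A (x - y)) : ℂ).re = 2 := by
      rw [← Complex.add_re, hsum1, hcast]
    have hre2 : (inner ℂ (x + Complex.I • y) (A (x + Complex.I • y)) : ℂ).re +
        (inner ℂ (x - Complex.I • y) (A (x - Complex.I • y)) : ℂ).re = 2 := by
      rw [← Complex.add_re, hsum2, hcast]
    have e1 := hptS (x + y)
    have e2 := hptS (x - y)
    have e3 := hptD (x + Complex.I • y)
    have e4 := hptD (x - Complex.I • y)
    have hnorm : ‖(4 : ℂ) * (inner ℂ z (B (T z)) : ℂ)‖ ≤
        ‖(inner ℂ (x + y) (A ((T12 + T21) (x + y))) : ℂ)‖ +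
        ‖(inner ℂ (x - y) (A ((T12 + T21) (x - y))) : ℂ)‖ +
        (‖(inner ℂ (x + Complex.I • y) (A ((T12 - T21) (x + Complex.I • y))) : ℂ)‖ +
        ‖(inner ℂ (x - Complex.I • y) (A ((T12 - T21) (x - Complex.I • y))) : ℂ)‖) := by
      rw [hid]
      calc ‖_ - Complex.I * _‖ ≤ ‖(inner ℂ (x + y) (A ((T12 + T21) (x + y))) : ℂ) -
            inner ℂ (x - y) (A ((T12 + T21) (x - y)))‖ +
            ‖Complex.I * ((inner ℂ (x + Complex.I • y) (A ((T12 - T21) (x + Complex.I • y))) : ℂ) -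
            inner ℂ (x - Complex.I • y) (A ((T12 - T21) (x - Complex.I • y))))‖ :=
            norm_sub_le _ _
      _ ≤ _ := by
          rw [norm_mul, Complex.norm_I, one_mul]
          exact add_le_add (norm_sub_le _ _) (norm_sub_le _ _)
    have h44 : ‖(4 : ℂ) * (inner ℂ z (B (T z)) : ℂ)‖ = 4 * ‖(inner ℂ z (B (T z)) : ℂ)‖ := by
      rw [norm_mul]
      norm_num
    have hS' : ‖(inner ℂ (x + y) (A ((T12 + T21) (x + y))) : ℂ)‖ +
        ‖(inner ℂ (x - y) (A ((T12 + T21) (x - y))) : ℂ)‖ ≤ 2 * wA A (T12 + T21) := by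
      calc _ ≤ wA A (T12 + T21) * (inner ℂ (x + y) (A (x + y)) : ℂ).re +
            wA A (T12 + T21) * (inner ℂ (x - y) (A (x - y)) : ℂ).re := add_le_add e1 e2
      _ = wA A (T12 + T21) * ((inner ℂ (x + y) (A (x + y)) : ℂ).re +
            (inner ℂ (x - y) (A (x - y)) : ℂ).re) := by ring
      _ = 2 * wA A (T12 + T21) := by rw [hre1]; ring
    have hD' : ‖(inner ℂ (x + Complex.I • y) (A ((T12 - T21) (x + Complex.I • y))) : ℂ)‖ +
        ‖(inner ℂ (x - Complex.I • y) (A ((T12 - T21) (x - Complex.I • y))) : ℂ)‖ ≤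
        2 * wA A (T12 - T21) := by
      calc _ ≤ wA A (T12 - T21) * (inner ℂ (x + Complex.I • y) (A (x + Complex.I • y)) : ℂ).re +
            wA A (T12 - T21) * (inner ℂ (x - Complex.I • y) (A (x - Complex.I • y)) : ℂ).re :=
            add_le_add e3 e4
      _ = wA A (T12 - T21) * ((inner ℂ (x + Complex.I • y) (A (x + Complex.I • y)) : ℂ).re +
            (inner ℂ (x - Complex.I • y) (A (x - Complex.I • y)) : ℂ).re) := by ring
      _ = 2 * wA A (T12 - T21) := by rw [hre2]; ring
    linarith
end

section
/- Let A > 0 on H, B = diag(A,A), T₁₂, T₂₁ ∈ B(H) admitting A-adjoints, T = [[0, T₁₂],[T₂₁, 0]]. Then w_B(T) = (1/2) sup_{θ∈ℝ} ‖e^{iθ} T₁₂ + e^{−iθ} T₂₁^{♯}‖_A, where T₂₁^{♯} is the A-adjoint of T₂₁ and ‖·‖_A the A-operator seminorm. -/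
open scoped ComplexOrder

set_option synthInstance.maxHeartbeats 1000000
set_option maxHeartbeats 1000000


lemma WBaux_align (z w : ℂ) : ∃ θ : ℝ,
    ‖Complex.exp (θ * Complex.I) * z + Complex.exp (-(θ * Complex.I)) * w‖ = ‖z‖ + ‖w‖ := by
  refine ⟨(w.arg - z.arg) / 2, ?_⟩
  set θ : ℝ := (w.arg - z.arg) / 2 with hθ
  set φ : ℝ := (z.arg + w.arg) / 2 with hφ
  have e1 : Complex.exp (θ * Complex.I) * z
      = ((‖z‖ : ℝ) : ℂ) * Complex.exp (φ * Complex.I) := by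
    conv_lhs => rw [← Complex.norm_mul_exp_arg_mul_I z]
    rw [mul_comm (Complex.exp _) _, mul_assoc, ← Complex.exp_add]
    congr 2
    push_cast [hθ, hφ]
    ring
  have e2 : Complex.exp (-(θ * Complex.I)) * w
      = ((‖w‖ : ℝ) : ℂ) * Complex.exp (φ * Complex.I) := by
    conv_lhs => rw [← Complex.norm_mul_exp_arg_mul_I w]
    rw [mul_comm (Complex.exp _) _, mul_assoc, ← Complex.exp_add]
    congr 2
    push_cast [hθ, hφ]
    ring
  rw [e1, e2, ← add_mul, norm_mul]
  have : ‖Complex.exp ((φ : ℂ) * Complex.I)‖ = 1 := by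
    rw [Complex.norm_exp]
    simp
  rw [this, mul_one]
  push_cast
  rw [← Complex.ofReal_add, Complex.norm_real]
  rw [Real.norm_eq_abs, abs_of_nonneg (by positivity)]


lemma WBaux_iter {c K N : ℝ} (hc : 0 < c) (hK : 0 < K) (hN : 0 < N)
    (a : ℕ → ℝ) (ha0 : ∀ n, 0 ≤ a n) (hrec : ∀ n, a n ^ 2 ≤ c * a (n + 1))
    (hbd : ∀ n, a n ≤ K * N ^ (2 ^ n)) : a 0 ≤ c * N := by
  set t : ℕ → ℝ := fun n => ((2 : ℝ)⁻¹) ^ n with ht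
  have ht0 : ∀ n, 0 < t n := fun n => pow_pos (by norm_num) n
  have key : ∀ n, a 0 ≤ c ^ (1 - t n) * a n ^ (t n) := by
    intro n
    induction n with
    | zero =>
      simp [ht]
    | succ n ih =>
      have h1 : a n ≤ c ^ ((2 : ℝ)⁻¹) * a (n + 1) ^ ((2 : ℝ)⁻¹) := by
        have h2 : a n ≤ Real.sqrt (c * a (n + 1)) := by
          rw [show a n = Real.sqrt (a n ^ 2) from (Real.sqrt_sq (ha0 n)).symm]
          exact Real.sqrt_le_sqrt (hrec n)
        rw [Real.sqrt_eq_rpow, Real.mul_rpow hc.le (ha0 (n + 1))] at h2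
        simpa [one_div] using h2
      calc a 0 ≤ c ^ (1 - t n) * a n ^ (t n) := ih
        _ ≤ c ^ (1 - t n) * (c ^ ((2:ℝ)⁻¹) * a (n+1) ^ ((2:ℝ)⁻¹)) ^ (t n) := by
            refine mul_le_mul_of_nonneg_left ?_ (Real.rpow_nonneg hc.le _)
            exact Real.rpow_le_rpow (ha0 n) h1 (ht0 n).le
        _ = c ^ (1 - t (n+1)) * a (n+1) ^ (t (n+1)) := by
            rw [Real.mul_rpow (Real.rpow_nonneg hc.le _) (Real.rpow_nonneg (ha0 _) _),
              (Real.rpow_mul hc.le (2:ℝ)⁻¹ (t n)).symm,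
              (Real.rpow_mul (ha0 (n+1)) (2:ℝ)⁻¹ (t n)).symm,
              ← mul_assoc, (Real.rpow_add hc (1 - t n) ((2:ℝ)⁻¹ * t n)).symm,
              show 1 - t n + (2:ℝ)⁻¹ * t n = 1 - t (n+1) from by simp [ht, pow_succ]; try ring
              ,
              show ((2:ℝ)⁻¹) * t n = t (n+1) from by simp [ht, pow_succ]; try ring
              ]
  have key2 : ∀ n, a 0 ≤ c * N * Real.exp (t n * (Real.log K - Real.log c)) := by
    intro n
    refine (key n).trans ?_
    have hb : a n ^ (t n) ≤ (K * N ^ (2 ^ n)) ^ (t n) :=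
      Real.rpow_le_rpow (ha0 n) (hbd n) (ht0 n).le
    have hNpow : ((N : ℝ) ^ (2 ^ n : ℕ)) ^ (t n) = N := by
      rw [← Real.rpow_natCast N (2 ^ n), ← Real.rpow_mul hN.le]
      have : ((2 ^ n : ℕ) : ℝ) * t n = 1 := by
        push_cast [ht]
        rw [← mul_pow]
        norm_num
      rw [this, Real.rpow_one]
    calc c ^ (1 - t n) * a n ^ t n
        ≤ c ^ (1 - t n) * (K * N ^ (2 ^ n)) ^ (t n) :=
          mul_le_mul_of_nonneg_left hb (Real.rpow_nonneg hc.le _)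
      _ = c * N * Real.exp (t n * (Real.log K - Real.log c)) := by
          rw [Real.mul_rpow hK.le (pow_nonneg hN.le _), hNpow,
            Real.rpow_def_of_pos hc, Real.rpow_def_of_pos hK]
          rw [show Real.exp (Real.log c * (1 - t n)) * (Real.exp (Real.log K * t n) * N)
              = N * Real.exp (Real.log c * (1 - t n) + Real.log K * t n) from by
                rw [Real.exp_add]; ring,
            show c * N * Real.exp (t n * (Real.log K - Real.log c))
              = N * Real.exp (Real.log c + t n * (Real.log K - Real.log c)) from by
                rw [Real.exp_add, Real.exp_log hc]; ring]
          congr 2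
          ring
  have htend : Filter.Tendsto t Filter.atTop (nhds 0) := by
    exact tendsto_pow_atTop_nhds_zero_of_lt_one (by norm_num : (0:ℝ) ≤ 2⁻¹)
      (by norm_num : (2:ℝ)⁻¹ < 1)
  have h1 : Filter.Tendsto (fun n => c * N * Real.exp (t n * (Real.log K - Real.log c)))
      Filter.atTop (nhds (c * N)) := by
    have h2 : Filter.Tendsto (fun n => t n * (Real.log K - Real.log c)) Filter.atTop (nhds 0) := by
      have := htend.mul_const (Real.log K - Real.log c)
      rwa [zero_mul] at this
    have h3 := (Real.continuous_exp.continuousAt (x := (0:ℝ))).tendsto.comp h2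
    rw [Real.exp_zero] at h3
    simpa using (h3.const_mul (c * N))
  exact ge_of_tendsto' h1 key2


lemma WBaux_dense {H : Type*} [NormedAddCommGroup H] [InnerProductSpace ℂ H] [CompleteSpace H]
    (A : H →L[ℂ] H) (hA : ∀ x : H, x ≠ 0 → 0 < (inner ℂ x (A x) : ℂ)) :
    Dense (Set.range A) := by
  have h : (LinearMap.range (A : H →ₗ[ℂ] H)).topologicalClosure = ⊤ := by
    rw [Submodule.topologicalClosure_eq_top_iff, Submodule.eq_bot_iff]
    intro v hv
    by_contra hv0
    have h1 : (inner ℂ (A v) v : ℂ) = 0 :=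
      (Submodule.mem_orthogonal _ _).mp hv (A v) (LinearMap.mem_range_self _ v)
    have h2 : (inner ℂ v (A v) : ℂ) = 0 := by
      rw [← inner_conj_symm] at h1
      simpa using congrArg (starRingEnd ℂ) h1
    exact absurd (h2 ▸ hA v hv0) (lt_irrefl _)
  have h2 := congrArg (fun K : Submodule ℂ H => (K : Set H)) h
  simp only [Submodule.topologicalClosure_coe, Submodule.top_coe] at h2
  rw [dense_iff_closure_eq]
  rw [show Set.range A = ((LinearMap.range (A : H →ₗ[ℂ] H) : Submodule ℂ H) : Set H) from by
    simp [LinearMap.coe_range]]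
  exact h2

lemma WBaux_approx {H : Type*} [NormedAddCommGroup H] [InnerProductSpace ℂ H]
    (Rt : H →L[ℂ] H) (hd : Dense (Set.range Rt)) {e : H} (he : Rt e ≠ 0) (v : H)
    {ε : ℝ} (hε : 0 < ε) :
    ∃ a : H, ‖Rt a‖ = 1 ∧ ‖v‖ - ε ≤ ‖(inner ℂ (Rt a) v : ℂ)‖ := by
  by_cases hv : v = 0
  · refine ⟨((‖Rt e‖⁻¹ : ℝ) : ℂ) • e, ?_, ?_⟩
    · rw [map_smul, norm_smul]
      simp [norm_pos_iff.mpr he, inv_mul_cancel₀ (norm_ne_zero_iff.mpr he)]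
    · simp [hv]
      linarith
  · set u₀ : H := ((‖v‖⁻¹ : ℝ) : ℂ) • v with hu₀
    have hvn : 0 < ‖v‖ := norm_pos_iff.mpr hv
    have hu₀n : ‖u₀‖ = 1 := by
      rw [hu₀, norm_smul]
      simp [abs_of_nonneg (inv_nonneg.mpr hvn.le), inv_mul_cancel₀ hvn.ne']
    set δ : ℝ := min (ε / (2 * ‖v‖ + 1)) (1/2) with hδ
    have hδ0 : 0 < δ := by
      apply lt_min
      · positivity
      · norm_num
    obtain ⟨w, ⟨a', rfl⟩, hwd⟩ := Metric.mem_closure_iff.mp (hd u₀) δ hδ0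
    rw [dist_comm, dist_eq_norm] at hwd
    have hra' : (1:ℝ)/2 ≤ ‖Rt a'‖ := by
      have h1 : ‖u₀‖ - ‖Rt a'‖ ≤ ‖Rt a' - u₀‖ := by
        rw [norm_sub_rev]; exact norm_sub_norm_le _ _
      have h2 : δ ≤ 1/2 := min_le_right _ _
      rw [hu₀n] at h1
      linarith
    have hra'0 : Rt a' ≠ 0 := by
      intro h0
      rw [h0, norm_zero] at hra'
      linarith
    set r : ℝ := ‖Rt a'‖ with hr
    have hr0 : 0 < r := norm_pos_iff.mpr hra'0
    refine ⟨((r⁻¹ : ℝ) : ℂ) • a', ?_, ?_⟩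
    · rw [map_smul, norm_smul]
      simp only [Complex.norm_real, Real.norm_eq_abs, abs_inv, abs_of_pos hr0, ← hr]
      exact inv_mul_cancel₀ hr0.ne' 
    · have hclose : ‖Rt (((r⁻¹ : ℝ) : ℂ) • a') - u₀‖ ≤ 2 * δ := by
        have e1 : Rt (((r⁻¹ : ℝ) : ℂ) • a') - Rt a' = ((r⁻¹ : ℝ) : ℂ) • Rt a' - Rt a' := by
          rw [map_smul]
        have e2 : ‖Rt (((r⁻¹ : ℝ) : ℂ) • a') - Rt a'‖ = |1 - r| := by
          rw [e1, show ((r⁻¹ : ℝ) : ℂ) • Rt a' - Rt a' = (((r⁻¹ - 1 : ℝ)) : ℂ) • Rt a' from by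
            push_cast; rw [sub_smul, one_smul], norm_smul]
          simp only [Complex.norm_real, Real.norm_eq_abs, ← hr]
          rw [abs_sub_comm]
          have hinv : r⁻¹ * r = 1 := inv_mul_cancel₀ hr0.ne'
          rw [show |1 - r⁻¹| * r = |(1 - r⁻¹) * r| from by rw [abs_mul, abs_of_pos hr0],
            show (1 - r⁻¹) * r = -(1 - r) from by linear_combination -hinv, abs_neg]
        have e3 : |1 - r| ≤ δ := by
          have h1 : ‖u₀‖ - ‖Rt a'‖ ≤ ‖u₀ - Rt a'‖ := norm_sub_norm_le _ _
          have h2 : ‖Rt a'‖ - ‖u₀‖ ≤ ‖Rt a' - u₀‖ := norm_sub_norm_le _ _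
          rw [norm_sub_rev] at h1
          rw [hu₀n] at h1 h2
          rw [abs_le]
          constructor <;> [linarith [hwd]; linarith [hwd]]
        calc ‖Rt (((r⁻¹ : ℝ) : ℂ) • a') - u₀‖
            ≤ ‖Rt (((r⁻¹ : ℝ) : ℂ) • a') - Rt a'‖ + ‖Rt a' - u₀‖ := by
              have := norm_sub_le_norm_sub_add_norm_sub (Rt (((r⁻¹ : ℝ) : ℂ) • a')) (Rt a') u₀
              exact this
          _ ≤ δ + δ := by rw [e2]; exact add_le_add e3 hwd.le
          _ = 2 * δ := by ring
      set a : H := ((r⁻¹ : ℝ) : ℂ) • a' with ha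
      have hsplit : (inner ℂ (Rt a) v : ℂ) = inner ℂ u₀ v + inner ℂ (Rt a - u₀) v := by
        rw [← inner_add_left]
        congr 1
        abel
      have hfirst : ‖(inner ℂ u₀ v : ℂ)‖ = ‖v‖ := by
        rw [hu₀, inner_smul_left]
        simp only [Complex.conj_ofReal]
        rw [norm_mul, @inner_self_eq_norm_sq_to_K ℂ]
        simp only [norm_pow, norm_mul, Complex.norm_real, Real.norm_eq_abs, abs_inv,
          abs_of_nonneg hvn.le, sq, RCLike.norm_ofReal]
        rw [← mul_assoc, inv_mul_cancel₀ hvn.ne', one_mul]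
      have hsecond : ‖(inner ℂ (Rt a - u₀) v : ℂ)‖ ≤ 2 * δ * ‖v‖ := by
        calc ‖(inner ℂ (Rt a - u₀) v : ℂ)‖ ≤ ‖Rt a - u₀‖ * ‖v‖ := norm_inner_le_norm _ _
          _ ≤ 2 * δ * ‖v‖ := by
            apply mul_le_mul_of_nonneg_right _ hvn.le
            exact hclose
      have hlow : ‖v‖ - 2 * δ * ‖v‖ ≤ ‖(inner ℂ (Rt a) v : ℂ)‖ := by
        have h1 : ‖(inner ℂ u₀ v : ℂ)‖ ≤ ‖(inner ℂ (Rt a) v : ℂ)‖ + ‖(inner ℂ (Rt a - u₀) v : ℂ)‖ := by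
          rw [hsplit]
          calc ‖(inner ℂ u₀ v : ℂ)‖ = ‖(inner ℂ u₀ v + inner ℂ (Rt a - u₀) v : ℂ) - inner ℂ (Rt a - u₀) v‖ := by
                congr 1; ring
            _ ≤ _ := norm_sub_le _ _
        rw [hfirst] at h1
        linarith
      have hfinal : 2 * δ * ‖v‖ ≤ ε := by
        have h1 : δ ≤ ε / (2 * ‖v‖ + 1) := min_le_left _ _
        have h2 : 2 * δ * ‖v‖ ≤ 2 * (ε / (2 * ‖v‖ + 1)) * ‖v‖ := by
          apply mul_le_mul_of_nonneg_right _ hvn.le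
          linarith
        have h3 : 2 * (ε / (2 * ‖v‖ + 1)) * ‖v‖ ≤ ε := by
          have hd1 : (0:ℝ) < 2 * ‖v‖ + 1 := by positivity
          have hfr : (2 * ‖v‖) / (2 * ‖v‖ + 1) ≤ 1 := by
            rw [div_le_one hd1]; linarith
          calc 2 * (ε / (2 * ‖v‖ + 1)) * ‖v‖ = ε * ((2 * ‖v‖) / (2 * ‖v‖ + 1)) := by ring
            _ ≤ ε * 1 := mul_le_mul_of_nonneg_left hfr hε.le
            _ = ε := mul_one ε
        linarith
      linarith

section Key
variable {H : Type*} [NormedAddCommGroup H] [InnerProductSpace ℂ H]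

lemma WBaux_key (Rt P Q : H →L[ℂ] H) (hd : Dense (Set.range Rt))
    (hinj : ∀ x : H, x ≠ 0 → Rt x ≠ 0)
    {CQ : ℝ} (hCQ : 0 ≤ CQ) (hQ : ∀ x, ‖Q x‖ ≤ CQ * ‖Rt x‖) :
    sSup {r : ℝ | ∃ a b : H, ‖Rt a‖ ^ 2 + ‖Rt b‖ ^ 2 = 1 ∧
        r = ‖(inner ℂ (Rt a) (P b) : ℂ) + (starRingEnd ℂ) (inner ℂ (Rt a) (Q b))‖}
      = (1/2) * ⨆ θ : ℝ, sSup {r : ℝ | ∃ b : H, b ≠ 0 ∧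
          r = ‖(Complex.exp ((θ:ℂ) * Complex.I) • P
              + Complex.exp (-((θ:ℂ) * Complex.I)) • Q) b‖ / ‖Rt b‖} := by
  set Zop : ℝ → H →L[ℂ] H := fun θ => Complex.exp ((θ:ℂ) * Complex.I) • P
      + Complex.exp (-((θ:ℂ) * Complex.I)) • Q with hZop
  set W : Set ℝ := {r : ℝ | ∃ a b : H, ‖Rt a‖ ^ 2 + ‖Rt b‖ ^ 2 = 1 ∧
      r = ‖(inner ℂ (Rt a) (P b) : ℂ) + (starRingEnd ℂ) (inner ℂ (Rt a) (Q b))‖} with hW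
  set Ns : ℝ → Set ℝ := fun θ => {r : ℝ | ∃ b : H, b ≠ 0 ∧ r = ‖Zop θ b‖ / ‖Rt b‖} with hNs
  show sSup W = (1/2) * ⨆ θ : ℝ, sSup (Ns θ)
  have hexp : ∀ ψ : ℝ, ‖Complex.exp ((ψ:ℂ) * Complex.I)‖ = 1 := fun ψ => by
    rw [Complex.norm_exp]; simp
  have hexp' : ∀ ψ : ℝ, ‖Complex.exp (-((ψ:ℂ) * Complex.I))‖ = 1 := fun ψ => by
    rw [Complex.norm_exp]; simp
  have hZapp : ∀ (θ : ℝ) (x : H), Zop θ x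
      = Complex.exp ((θ:ℂ) * Complex.I) • P x + Complex.exp (-((θ:ℂ) * Complex.I)) • Q x := by
    intro θ x; simp [hZop]
  have hZle : ∀ (θ : ℝ) (x : H), ‖Zop θ x‖ ≤ ‖P x‖ + ‖Q x‖ := by
    intro θ x
    rw [hZapp]
    refine (norm_add_le _ _).trans ?_
    rw [norm_smul, norm_smul, hexp, hexp', one_mul, one_mul]
  have hZinner : ∀ (θ : ℝ) (u : H) (b : H), (inner ℂ u (Zop θ b) : ℂ)
      = Complex.exp ((θ:ℂ) * Complex.I) * inner ℂ u (P b)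
        + Complex.exp (-((θ:ℂ) * Complex.I)) * inner ℂ u (Q b) := by
    intro θ u b
    rw [hZapp, inner_add_right, inner_smul_right, inner_smul_right]
  rcases subsingleton_or_nontrivial H with hs | hs
  · have hW0 : W = ∅ := by
      rw [hW]; ext r
      simp only [Set.mem_setOf_eq, Set.mem_empty_iff_false, iff_false, not_exists]
      intro a b hab
      exact absurd hab.1 (by rw [Subsingleton.elim a 0, Subsingleton.elim b 0]; simp)
    have hN0 : ∀ θ : ℝ, sSup (Ns θ) = 0 := by
      intro θ
      have hemp : Ns θ = ∅ := by
        rw [hNs]; ext r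
        simp only [Set.mem_setOf_eq, Set.mem_empty_iff_false, iff_false, not_exists]
        intro b hb
        exact hb.1 (Subsingleton.elim b 0)
      rw [hemp, Real.sSup_empty]
    rw [hW0, Real.sSup_empty]
    simp only [hN0, ciSup_const]
    ring
  · obtain ⟨e, he⟩ := exists_ne (0 : H)
    have hRte : Rt e ≠ 0 := hinj e he
    set c₀ : ℝ := Real.sqrt (1/2) with hc₀def
    have hc₀ : 0 < c₀ := Real.sqrt_pos.mpr (by norm_num)
    have hc₀sq : c₀ ^ 2 = 1/2 := Real.sq_sqrt (by norm_num)
    -- basic construction of large elements of W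
    have build : ∀ (θ : ℝ) (b : H), b ≠ 0 → ∀ ε : ℝ, 0 < ε →
        ∃ w ∈ W, (1/2) * (‖Zop θ b‖ / ‖Rt b‖) - ε ≤ w := by
      intro θ b hb ε hε
      have hs0 : 0 < ‖Rt b‖ := norm_pos_iff.mpr (hinj b hb)
      set b' : H := (((c₀ / ‖Rt b‖ : ℝ)) : ℂ) • b with hb'
      have hRb' : ‖Rt b'‖ = c₀ := by
        rw [hb', map_smul, norm_smul, Complex.norm_real, Real.norm_eq_abs,
          abs_of_pos (by positivity), div_mul_cancel₀ _ hs0.ne']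
      have hZb' : ∀ θ' : ℝ, ‖Zop θ' b'‖ = (c₀ / ‖Rt b‖) * ‖Zop θ' b‖ := by
        intro θ'
        rw [hb', map_smul, norm_smul, Complex.norm_real, Real.norm_eq_abs,
          abs_of_pos (by positivity)]
      obtain ⟨a, ha1, ha2⟩ := WBaux_approx Rt hd hRte (Zop θ b')
        (div_pos hε hc₀)
      set a' : H := ((c₀ : ℝ) : ℂ) • a with ha'
      have hRa' : ‖Rt a'‖ = c₀ := by
        rw [ha', map_smul, norm_smul, Complex.norm_real, Real.norm_eq_abs,
          abs_of_pos hc₀, ha1, mul_one]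
      set z₁ : ℂ := inner ℂ (Rt a') (P b') with hz₁
      set z₂ : ℂ := inner ℂ (Rt a') (Q b') with hz₂
      obtain ⟨ψ, hψ⟩ := WBaux_align z₁ ((starRingEnd ℂ) z₂)
      set c : ℂ := Complex.exp (-((ψ:ℂ) * Complex.I)) with hc
      set a'' : H := c • a' with ha''
      have hcconj : (starRingEnd ℂ) c = Complex.exp ((ψ:ℂ) * Complex.I) := by
        rw [hc, ← Complex.exp_conj]
        congr 1
        simp [Complex.conj_I, Complex.conj_ofReal]
      have hRa'' : ‖Rt a''‖ = c₀ := by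
        rw [ha'', map_smul, norm_smul, hc, hexp', one_mul, hRa']
      have hcon : ‖Rt a''‖ ^ 2 + ‖Rt b'‖ ^ 2 = 1 := by
        rw [hRa'', hRb', hc₀sq]; norm_num
      have hval : (inner ℂ (Rt a'') (P b') : ℂ) + (starRingEnd ℂ) (inner ℂ (Rt a'') (Q b'))
          = Complex.exp ((ψ:ℂ) * Complex.I) * z₁ + c * (starRingEnd ℂ) z₂ := by
        rw [ha'', map_smul, inner_smul_left, inner_smul_left, map_mul, Complex.conj_conj,
          hcconj, ← hz₁, ← hz₂]
      have hmem : (‖z₁‖ + ‖z₂‖) ∈ W := by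
        refine ⟨a'', b', hcon, ?_⟩
        rw [hval, hc, hψ, RCLike.norm_conj]
      refine ⟨‖z₁‖ + ‖z₂‖, hmem, ?_⟩
      have hstep1 : ‖(inner ℂ (Rt a') (Zop θ b') : ℂ)‖ ≤ ‖z₁‖ + ‖z₂‖ := by
        rw [hZinner θ (Rt a') b', ← hz₁, ← hz₂]
        refine (norm_add_le _ _).trans ?_
        rw [norm_mul, norm_mul, hexp, hexp', one_mul, one_mul]
      have hstep2 : c₀ * ‖(inner ℂ (Rt a) (Zop θ b') : ℂ)‖
          = ‖(inner ℂ (Rt a') (Zop θ b') : ℂ)‖ := by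
        rw [show Rt a' = ((c₀ : ℝ) : ℂ) • Rt a from by rw [ha', map_smul],
          inner_smul_left, norm_mul, RCLike.norm_conj, Complex.norm_real,
          Real.norm_eq_abs, abs_of_pos hc₀]
      have hfinal : c₀ * (‖Zop θ b'‖ - ε / c₀) ≤ ‖z₁‖ + ‖z₂‖ := by
        calc c₀ * (‖Zop θ b'‖ - ε / c₀)
            ≤ c₀ * ‖(inner ℂ (Rt a) (Zop θ b') : ℂ)‖ :=
              mul_le_mul_of_nonneg_left ha2 hc₀.le
          _ = ‖(inner ℂ (Rt a') (Zop θ b') : ℂ)‖ := hstep2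
          _ ≤ ‖z₁‖ + ‖z₂‖ := hstep1
      have halg : c₀ * (‖Zop θ b'‖ - ε / c₀) = (1/2) * (‖Zop θ b‖ / ‖Rt b‖) - ε := by
        rw [hZb' θ, mul_sub,
          show c₀ * (c₀ / ‖Rt b‖ * ‖Zop θ b‖) = c₀ ^ 2 * (‖Zop θ b‖ / ‖Rt b‖) from by ring,
          hc₀sq, show c₀ * (ε / c₀) = ε from by field_simp]
      linarith [halg ▸ hfinal]
    by_cases hP : ∃ CP : ℝ, 0 ≤ CP ∧ ∀ x, ‖P x‖ ≤ CP * ‖Rt x‖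
    · obtain ⟨CP, hCP0, hP⟩ := hP
      have hNsne : ∀ θ : ℝ, (‖Zop θ e‖ / ‖Rt e‖) ∈ Ns θ := fun θ => ⟨e, he, rfl⟩
      have hNsbd : ∀ θ : ℝ, ∀ r ∈ Ns θ, r ≤ CP + CQ := by
        rintro θ r ⟨b, hb, rfl⟩
        rw [div_le_iff₀ (norm_pos_iff.mpr (hinj b hb))]
        refine (hZle θ b).trans ?_
        have := hP b; have := hQ b; linarith
      have hNsbdd : ∀ θ : ℝ, BddAbove (Ns θ) := fun θ => ⟨CP + CQ, fun r hr => hNsbd θ r hr⟩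
      have hNle : ∀ θ : ℝ, sSup (Ns θ) ≤ CP + CQ := fun θ =>
        csSup_le ⟨_, hNsne θ⟩ (hNsbd θ)
      have hNnn : ∀ θ : ℝ, 0 ≤ sSup (Ns θ) := fun θ =>
        le_trans (div_nonneg (norm_nonneg _) (norm_nonneg _)) (le_csSup (hNsbdd θ) (hNsne θ))
      have hrange : BddAbove (Set.range fun θ : ℝ => sSup (Ns θ)) := by
        refine ⟨CP + CQ, ?_⟩
        rintro r ⟨θ, rfl⟩
        exact hNle θ
      have hsup_nn : 0 ≤ ⨆ θ : ℝ, sSup (Ns θ) :=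
        le_trans (hNnn 0) (le_ciSup hrange 0)
      have hWle : ∀ w ∈ W, w ≤ (1/2) * ⨆ θ : ℝ, sSup (Ns θ) := by
        rintro w ⟨a, b, hab, rfl⟩
        by_cases hb : b = 0
        · have hz : (inner ℂ (Rt a) (P b) : ℂ) + (starRingEnd ℂ) (inner ℂ (Rt a) (Q b)) = 0 := by
            rw [hb]; simp
          rw [hz, norm_zero]
          linarith
        · have hRtb : 0 < ‖Rt b‖ := norm_pos_iff.mpr (hinj b hb)
          obtain ⟨θ, hθ⟩ := WBaux_align (inner ℂ (Rt a) (P b)) (inner ℂ (Rt a) (Q b))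
          have hZbd : ‖Zop θ b‖ ≤ sSup (Ns θ) * ‖Rt b‖ := by
            have hmem : ‖Zop θ b‖ / ‖Rt b‖ ∈ Ns θ := ⟨b, hb, rfl⟩
            exact (div_le_iff₀ hRtb).mp (le_csSup (hNsbdd θ) hmem)
          calc ‖(inner ℂ (Rt a) (P b) : ℂ) + (starRingEnd ℂ) (inner ℂ (Rt a) (Q b))‖
              ≤ ‖(inner ℂ (Rt a) (P b) : ℂ)‖ + ‖(starRingEnd ℂ) (inner ℂ (Rt a) (Q b) : ℂ)‖ :=
                norm_add_le _ _
            _ = ‖(inner ℂ (Rt a) (P b) : ℂ)‖ + ‖(inner ℂ (Rt a) (Q b) : ℂ)‖ := by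
                rw [RCLike.norm_conj]
            _ = ‖Complex.exp ((θ:ℂ) * Complex.I) * inner ℂ (Rt a) (P b)
                + Complex.exp (-((θ:ℂ) * Complex.I)) * inner ℂ (Rt a) (Q b)‖ := hθ.symm
            _ = ‖(inner ℂ (Rt a) (Zop θ b) : ℂ)‖ := by rw [hZinner]
            _ ≤ ‖Rt a‖ * ‖Zop θ b‖ := norm_inner_le_norm _ _
            _ ≤ ‖Rt a‖ * (sSup (Ns θ) * ‖Rt b‖) :=
                mul_le_mul_of_nonneg_left hZbd (norm_nonneg _)
            _ ≤ (1/2) * sSup (Ns θ) := by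
                rw [show ‖Rt a‖ * (sSup (Ns θ) * ‖Rt b‖)
                    = (‖Rt a‖ * ‖Rt b‖) * sSup (Ns θ) from by ring]
                refine mul_le_mul_of_nonneg_right ?_ (hNnn θ)
                nlinarith [sq_nonneg (‖Rt a‖ - ‖Rt b‖)]
            _ ≤ (1/2) * ⨆ θ : ℝ, sSup (Ns θ) := by
                have := le_ciSup hrange θ
                linarith
      have hWne : W.Nonempty := by
        refine ⟨_, ((‖Rt e‖⁻¹ : ℝ) : ℂ) • e, 0, ?_, rfl⟩
        rw [map_smul, norm_smul, Complex.norm_real, Real.norm_eq_abs, abs_inv,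
          abs_of_pos (norm_pos_iff.mpr hRte), inv_mul_cancel₀ (norm_ne_zero_iff.mpr hRte)]
        simp
      have hWbdd : BddAbove W := ⟨(1/2) * ⨆ θ : ℝ, sSup (Ns θ), fun w hw => hWle w hw⟩
      have hge : (⨆ θ : ℝ, sSup (Ns θ)) ≤ 2 * sSup W := by
        refine ciSup_le fun θ => csSup_le ⟨_, hNsne θ⟩ ?_
        rintro r ⟨b, hb, rfl⟩
        have h3 : (1/2) * (‖Zop θ b‖ / ‖Rt b‖) ≤ sSup W := by
          refine le_of_forall_pos_le_add fun ε hε => ?_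
          obtain ⟨w, hwW, hwge⟩ := build θ b hb ε hε
          have := le_csSup hWbdd hwW
          linarith
        linarith
      refine le_antisymm (csSup_le hWne hWle) ?_
      linarith
    · push_neg at hP
      have hfind : ∀ C : ℝ, 0 ≤ C → ∃ x : H, x ≠ 0 ∧ (C + CQ) * ‖Rt x‖ < ‖P x‖ := by
        intro C hC0
        obtain ⟨x, hx⟩ := hP (C + CQ) (by linarith)
        refine ⟨x, ?_, hx⟩
        rintro rfl
        simp only [map_zero, norm_zero, mul_zero] at hx
        exact absurd hx (lt_irrefl 0)
      have hNub : ∀ θ : ℝ, ¬BddAbove (Ns θ) := by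
        rintro θ ⟨C, hC⟩
        obtain ⟨x, hx0, hx⟩ := hfind (max C 0) (le_max_right _ _)
        have hRx : 0 < ‖Rt x‖ := norm_pos_iff.mpr (hinj x hx0)
        have hlow : ‖P x‖ - ‖Q x‖ ≤ ‖Zop θ x‖ := by
          have h1 : ‖Complex.exp ((θ:ℂ) * Complex.I) • P x‖
              ≤ ‖Zop θ x‖ + ‖Complex.exp (-((θ:ℂ) * Complex.I)) • Q x‖ := by
            rw [show Complex.exp ((θ:ℂ) * Complex.I) • P x
                = Zop θ x - Complex.exp (-((θ:ℂ) * Complex.I)) • Q x from by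
              rw [hZapp]; abel]
            exact norm_sub_le _ _
          rw [norm_smul, norm_smul, hexp, hexp', one_mul, one_mul] at h1
          linarith
        have hmem : ‖Zop θ x‖ / ‖Rt x‖ ∈ Ns θ := ⟨x, hx0, rfl⟩
        have hle := (div_le_iff₀ hRx).mp (hC hmem)
        have hQx := hQ x
        have hCx : C * ‖Rt x‖ ≤ max C 0 * ‖Rt x‖ :=
          mul_le_mul_of_nonneg_right (le_max_left _ _) hRx.le
        linarith
      have hNs0 : ∀ θ : ℝ, sSup (Ns θ) = 0 := fun θ =>
        Real.sSup_of_not_bddAbove (hNub θ)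
      have hWub : ¬BddAbove W := by
        rintro ⟨C, hC⟩
        set C' : ℝ := max C 0 with hC'
        have hC'0 : 0 ≤ C' := le_max_right _ _
        obtain ⟨b, hb0, hbx⟩ := hfind (2 * (C' + 1) + CQ) (by positivity)
        have hRb : 0 < ‖Rt b‖ := norm_pos_iff.mpr (hinj b hb0)
        have hlow : ‖P b‖ - ‖Q b‖ ≤ ‖Zop 0 b‖ := by
          have h1 : ‖Complex.exp ((0:ℝ) * Complex.I) • P b‖
              ≤ ‖Zop 0 b‖ + ‖Complex.exp (-(((0:ℝ):ℂ) * Complex.I)) • Q b‖ := by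
            rw [show Complex.exp (((0:ℝ):ℂ) * Complex.I) • P b
                = Zop 0 b - Complex.exp (-(((0:ℝ):ℂ) * Complex.I)) • Q b from by
              rw [hZapp]; abel]
            exact norm_sub_le _ _
          rw [norm_smul, norm_smul, hexp 0, hexp' 0, one_mul, one_mul] at h1
          linarith
        have hq : 2 * (C' + 1) * ‖Rt b‖ < ‖Zop 0 b‖ := by
          have hQb := hQ b
          nlinarith [mul_nonneg hCQ hRb.le]
        obtain ⟨w, hwW, hwge⟩ := build 0 b hb0 1 one_pos
        have hwle : w ≤ C := hC hwW
        have hq2 : 2 * (C' + 1) < ‖Zop 0 b‖ / ‖Rt b‖ := (lt_div_iff₀ hRb).mpr hq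
        have hCC' : C ≤ C' := le_max_left _ _
        linarith
      rw [Real.sSup_of_not_bddAbove hWub]
      simp only [hNs0, ciSup_const]
      ring

end Key

/-- For `A > 0`, `B = diag(A,A)` and `T = [[0,T₁₂],[T₂₁,0]]` on `H ⊕ H`:
`w_B(T) = (1/2) sup_{θ∈ℝ} ‖e^{iθ}T₁₂ + e^{−iθ}T₂₁^♯‖_A`. -/
theorem wB_eq_sup_normA {H : Type*} [NormedAddCommGroup H] [InnerProductSpace ℂ H]
    [CompleteSpace H] (A T12 T21 T21s : H →L[ℂ] H)
    (hA : ∀ x : H, x ≠ 0 → 0 < (inner ℂ x (A x) : ℂ))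
    (hT21s : A.comp T21s = (ContinuousLinearMap.adjoint T21).comp A)
    (B T : (PiLp 2 fun _ : Fin 2 => H) →L[ℂ] (PiLp 2 fun _ : Fin 2 => H))
    (hB : ∀ x i, B x i = A (x i))
    (hT : ∀ x, T x 0 = T12 (x 1) ∧ T x 1 = T21 (x 0)) :
    wA B T = (1/2) * ⨆ θ : ℝ,
      normA A (Complex.exp (θ * Complex.I) • T12 + Complex.exp (-(θ * Complex.I)) • T21s) := by
  classical
  -- A is positive, hence selfadjoint
  have hA0 : (0 : H →L[ℂ] H) ≤ A := by
    rw [ContinuousLinearMap.nonneg_iff_isPositive, ContinuousLinearMap.isPositive_iff_complex]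
    intro x
    by_cases hx : x = 0
    · simp [hx]
    · have h := hA x hx
      rw [Complex.lt_def] at h
      simp only [Complex.zero_re, Complex.zero_im] at h
      have hc : (inner ℂ (A x) x : ℂ) = (starRingEnd ℂ) (inner ℂ x (A x)) :=
        (inner_conj_symm _ _).symm
      have hz : (starRingEnd ℂ) (inner ℂ x (A x) : ℂ) = inner ℂ x (A x) :=
        Complex.conj_eq_iff_im.mpr h.2.symm
      have hre : (((inner ℂ x (A x) : ℂ).re : ℝ) : ℂ) = inner ℂ x (A x) :=
        Complex.conj_eq_iff_re.mp hz
      have hAxx : (inner ℂ (A x) x : ℂ) = inner ℂ x (A x) := hc.trans hz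
      constructor
      · rw [hAxx]
        exact_mod_cast hre
      · rw [hAxx]
        exact_mod_cast h.1.le
  have hAsa : IsSelfAdjoint A := IsSelfAdjoint.of_nonneg hA0
  set Rt : H →L[ℂ] H := CFC.sqrt A with hRtdef
  have hRt0 : (0 : H →L[ℂ] H) ≤ Rt := CFC.sqrt_nonneg A
  have hRtsa : IsSelfAdjoint Rt := IsSelfAdjoint.of_nonneg hRt0
  have hRtmul : Rt * Rt = A := CFC.sqrt_mul_sqrt_self A hA0
  have hRtapp : ∀ y : H, A y = Rt (Rt y) := by
    intro y
    conv_lhs => rw [← hRtmul]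
    rfl
  have hAxy : ∀ x y : H, (inner ℂ x (A y) : ℂ) = inner ℂ (Rt x) (Rt y) := by
    intro x y
    rw [hRtapp y, show (inner ℂ x (Rt (Rt y)) : ℂ)
        = inner ℂ x (ContinuousLinearMap.adjoint Rt (Rt y)) from by rw [hRtsa.adjoint_eq]]
    exact ContinuousLinearMap.adjoint_inner_right Rt x (Rt y)
  have hnormsq : ∀ x : H, (inner ℂ x (A x) : ℂ) = ((‖Rt x‖ ^ 2 : ℝ) : ℂ) := by
    intro x
    rw [hAxy]
    exact_mod_cast inner_self_eq_norm_sq_to_K (Rt x)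
  have hinj : ∀ x : H, x ≠ 0 → Rt x ≠ 0 := by
    intro x hx h0
    have h := hA x hx
    rw [hnormsq x, h0] at h
    simp at h
  have hdA : Dense (Set.range A) := WBaux_dense A hA
  have hsub : Set.range (A : H → H) ⊆ Set.range (Rt : H → H) := by
    rintro _ ⟨x, rfl⟩
    exact ⟨Rt x, (hRtapp x).symm⟩
  have hd : Dense (Set.range (Rt : H → H)) := Dense.mono hsub hdA
  -- pointwise adjoint relations
  have hAT21s : ∀ x y : H, (inner ℂ x (A (T21s y)) : ℂ) = inner ℂ (T21 x) (A y) := by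
    intro x y
    have h1 : A (T21s y) = ContinuousLinearMap.adjoint T21 (A y) := DFunLike.congr_fun hT21s y
    rw [h1]
    exact ContinuousLinearMap.adjoint_inner_right _ _ _
  have hcomp : A.comp T21 = (ContinuousLinearMap.adjoint T21s).comp A := by
    have h := congrArg ContinuousLinearMap.adjoint hT21s
    rw [ContinuousLinearMap.adjoint_comp, ContinuousLinearMap.adjoint_comp,
      ContinuousLinearMap.adjoint_adjoint, hAsa.adjoint_eq] at h
    exact h.symm
  have hAT21 : ∀ x y : H, (inner ℂ x (A (T21 y)) : ℂ) = inner ℂ (T21s x) (A y) := by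
    intro x y
    have h1 : A (T21 y) = ContinuousLinearMap.adjoint T21s (A y) := DFunLike.congr_fun hcomp y
    rw [h1]
    exact ContinuousLinearMap.adjoint_inner_right _ _ _
  -- the operator E = T21 ∘ T21s and the boundedness of Rt ∘ T21s relative to Rt
  set E : H →L[ℂ] H := T21.comp T21s with hE
  have hAE : ∀ u w : H, (inner ℂ u (A (E w)) : ℂ) = inner ℂ (E u) (A w) := by
    intro u w
    calc (inner ℂ u (A (E w)) : ℂ) = inner ℂ u (A (T21 (T21s w))) := rfl
      _ = inner ℂ (T21s u) (A (T21s w)) := hAT21 u (T21s w)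
      _ = inner ℂ (T21 (T21s u)) (A w) := hAT21s (T21s u) w
      _ = inner ℂ (E u) (A w) := rfl
  have hiter : ∀ (m : ℕ) (u w : H),
      (inner ℂ u (A ((⇑E)^[m] w)) : ℂ) = inner ℂ ((⇑E)^[m] u) (A w) := by
    intro m
    induction m with
    | zero => intro u w; simp
    | succ m ih =>
      intro u w
      rw [Function.iterate_succ_apply, ih u (E w), hAE, Function.iterate_succ_apply']
  have hitnorm : ∀ (m : ℕ) (y : H), ‖(⇑E)^[m] y‖ ≤ ‖E‖ ^ m * ‖y‖ := by
    intro m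
    induction m with
    | zero => intro y; simp
    | succ m ih =>
      intro y
      rw [Function.iterate_succ_apply]
      calc ‖(⇑E)^[m] (E y)‖ ≤ ‖E‖ ^ m * ‖E y‖ := ih (E y)
        _ ≤ ‖E‖ ^ m * (‖E‖ * ‖y‖) :=
          mul_le_mul_of_nonneg_left (E.le_opNorm y) (pow_nonneg (norm_nonneg _) m)
        _ = ‖E‖ ^ (m + 1) * ‖y‖ := by rw [pow_succ]; ring
  have hQbound : ∀ x : H, ‖Rt (T21s x)‖ ≤ Real.sqrt ‖E‖ * ‖Rt x‖ := by
    intro x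
    by_cases hx : x = 0
    · simp [hx]
    have hc0 : 0 < ‖Rt x‖ := norm_pos_iff.mpr (hinj x hx)
    have hstep0 : ‖Rt (T21s x)‖ ^ 2 ≤ ‖Rt (E x)‖ * ‖Rt x‖ := by
      have h1 : ((‖Rt (T21s x)‖ ^ 2 : ℝ) : ℂ) = inner ℂ (T21s x) (A (T21s x)) :=
        (hnormsq (T21s x)).symm
      have h2 : (inner ℂ (T21s x) (A (T21s x)) : ℂ) = inner ℂ (Rt (E x)) (Rt x) := by
        rw [hAT21s, hAxy]
        rfl
      have h3 : ‖Rt (T21s x)‖ ^ 2 = ((inner ℂ (Rt (E x)) (Rt x) : ℂ)).re := by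
        rw [← h2, ← h1, Complex.ofReal_re]
      rw [h3]
      calc ((inner ℂ (Rt (E x)) (Rt x) : ℂ)).re ≤ ‖(inner ℂ (Rt (E x)) (Rt x) : ℂ)‖ :=
            Complex.re_le_norm _
        _ ≤ ‖Rt (E x)‖ * ‖Rt x‖ := norm_inner_le_norm _ _
    have hExle : ‖Rt (E x)‖ ≤ ‖Rt x‖ * ‖E‖ := by
      by_cases hE0 : E = 0
      · rw [hE0]
        simp
      · have hEn : 0 < ‖E‖ := norm_pos_iff.mpr hE0
        have hKpos : (0:ℝ) < ‖Rt‖ * ‖x‖ + 1 := by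
          have : (0:ℝ) ≤ ‖Rt‖ * ‖x‖ := by positivity
          linarith
        refine WBaux_iter hc0 hKpos hEn (fun n => ‖Rt ((⇑E)^[2 ^ n] x)‖)
          (fun n => norm_nonneg _) ?_ ?_
        · intro n
          have h1 : ‖Rt ((⇑E)^[2 ^ n] x)‖ ^ 2
              = ((inner ℂ ((⇑E)^[2 ^ n] x) (A ((⇑E)^[2 ^ n] x)) : ℂ)).re := by
            rw [hnormsq, Complex.ofReal_re]
          have h2 : (inner ℂ ((⇑E)^[2 ^ n] x) (A ((⇑E)^[2 ^ n] x)) : ℂ)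
              = inner ℂ (Rt ((⇑E)^[2 ^ (n+1)] x)) (Rt x) := by
            rw [hiter (2 ^ n) ((⇑E)^[2 ^ n] x) x, ← Function.iterate_add_apply,
              ← hAxy]
            congr 2
            rw [pow_succ, mul_two]
          rw [h1, h2]
          calc ((inner ℂ (Rt ((⇑E)^[2 ^ (n+1)] x)) (Rt x) : ℂ)).re
              ≤ ‖(inner ℂ (Rt ((⇑E)^[2 ^ (n+1)] x)) (Rt x) : ℂ)‖ := Complex.re_le_norm _
            _ ≤ ‖Rt ((⇑E)^[2 ^ (n+1)] x)‖ * ‖Rt x‖ := norm_inner_le_norm _ _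
            _ = ‖Rt x‖ * ‖Rt ((⇑E)^[2 ^ (n+1)] x)‖ := mul_comm _ _
        · intro n
          calc ‖Rt ((⇑E)^[2 ^ n] x)‖ ≤ ‖Rt‖ * ‖(⇑E)^[2 ^ n] x‖ := Rt.le_opNorm _
            _ ≤ ‖Rt‖ * (‖E‖ ^ (2 ^ n) * ‖x‖) :=
              mul_le_mul_of_nonneg_left (hitnorm (2 ^ n) x) (norm_nonneg _)
            _ ≤ (‖Rt‖ * ‖x‖ + 1) * ‖E‖ ^ (2 ^ n) := by
              have h4 : (0:ℝ) ≤ ‖E‖ ^ (2 ^ n) := pow_nonneg (norm_nonneg _) _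
              nlinarith [norm_nonneg Rt, norm_nonneg x]
    have hsq : ‖Rt (T21s x)‖ ^ 2 ≤ (Real.sqrt ‖E‖ * ‖Rt x‖) ^ 2 := by
      rw [mul_pow, Real.sq_sqrt (norm_nonneg E)]
      nlinarith [hstep0, hExle, hc0]
    calc ‖Rt (T21s x)‖ = Real.sqrt (‖Rt (T21s x)‖ ^ 2) := (Real.sqrt_sq (norm_nonneg _)).symm
      _ ≤ Real.sqrt ((Real.sqrt ‖E‖ * ‖Rt x‖) ^ 2) := Real.sqrt_le_sqrt hsq
      _ = Real.sqrt ‖E‖ * ‖Rt x‖ := Real.sqrt_sq (by positivity)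
  -- instantiate the key lemma with P = Rt ∘ T12, Q = Rt ∘ T21s
  set P : H →L[ℂ] H := Rt.comp T12 with hP
  set Q : H →L[ℂ] H := Rt.comp T21s with hQ
  have hQb : ∀ x : H, ‖Q x‖ ≤ Real.sqrt ‖E‖ * ‖Rt x‖ := hQbound
  -- left-hand side set conversion
  have hWeq : {r : ℝ | ∃ x : PiLp 2 (fun _ : Fin 2 => H), (inner ℂ x (B x) : ℂ) = 1 ∧
      r = ‖(inner ℂ x (B (T x)) : ℂ)‖}
      = {r : ℝ | ∃ a b : H, ‖Rt a‖ ^ 2 + ‖Rt b‖ ^ 2 = 1 ∧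
        r = ‖(inner ℂ (Rt a) (P b) : ℂ) + (starRingEnd ℂ) (inner ℂ (Rt a) (Q b))‖} := by
    have hBx : ∀ x y : PiLp 2 (fun _ : Fin 2 => H),
        (inner ℂ x (B y) : ℂ) = inner ℂ (x 0) (A (y 0)) + inner ℂ (x 1) (A (y 1)) := by
      intro x y
      rw [PiLp.inner_apply, Fin.sum_univ_two, hB, hB]
    have hval : ∀ x : PiLp 2 (fun _ : Fin 2 => H),
        (inner ℂ x (B (T x)) : ℂ)
          = (inner ℂ (Rt (x 0)) (P (x 1)) : ℂ)
            + (starRingEnd ℂ) (inner ℂ (Rt (x 0)) (Q (x 1))) := by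
      intro x
      rw [hBx x (T x), (hT x).1, (hT x).2]
      congr 1
      · rw [hAxy]
        rfl
      · rw [hAT21 (x 1) (x 0), hAxy, ← inner_conj_symm]
        rfl
    have hcon : ∀ x : PiLp 2 (fun _ : Fin 2 => H),
        (inner ℂ x (B x) : ℂ) = ((‖Rt (x 0)‖ ^ 2 + ‖Rt (x 1)‖ ^ 2 : ℝ) : ℂ) := by
      intro x
      rw [hBx x x, hnormsq, hnormsq]
      push_cast
      ring
    ext r
    simp only [Set.mem_setOf_eq]
    constructor
    · rintro ⟨x, hx1, rfl⟩
      refine ⟨x 0, x 1, ?_, ?_⟩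
      · have := (hcon x).symm.trans hx1
        exact_mod_cast this
      · rw [hval x]
    · rintro ⟨a, b, hab, rfl⟩
      set x : PiLp 2 (fun _ : Fin 2 => H) := WithLp.toLp 2 ![a, b] with hx
      have hx0 : x 0 = a := rfl
      have hx1 : x 1 = b := rfl
      refine ⟨x, ?_, ?_⟩
      · rw [hcon x, hx0, hx1, hab]
        norm_num
      · rw [hval x, hx0, hx1]
  -- right-hand side set conversion
  have hNeq : ∀ θ : ℝ,
      {r : ℝ | ∃ x ∈ closure (Set.range (A : H → H)), x ≠ 0 ∧
        r = Real.sqrt ((inner ℂ ((Complex.exp (θ * Complex.I) • T12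
            + Complex.exp (-(θ * Complex.I)) • T21s) x)
            (A ((Complex.exp (θ * Complex.I) • T12
            + Complex.exp (-(θ * Complex.I)) • T21s) x)) : ℂ)).re
          / Real.sqrt ((inner ℂ x (A x) : ℂ)).re}
      = {r : ℝ | ∃ b : H, b ≠ 0 ∧
          r = ‖(Complex.exp ((θ:ℂ) * Complex.I) • P
              + Complex.exp (-((θ:ℂ) * Complex.I)) • Q) b‖ / ‖Rt b‖} := by
    intro θ
    have hcl : closure (Set.range (A : H → H)) = Set.univ := hdA.closure_eq
    have hRtS : ∀ x : H, Rt ((Complex.exp (θ * Complex.I) • T12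
        + Complex.exp (-(θ * Complex.I)) • T21s) x)
        = (Complex.exp ((θ:ℂ) * Complex.I) • P
            + Complex.exp (-((θ:ℂ) * Complex.I)) • Q) x := by
      intro x
      simp only [ContinuousLinearMap.add_apply, ContinuousLinearMap.smul_apply, map_add,
        map_smul, ContinuousLinearMap.comp_apply, hP, hQ]
    have hnum : ∀ x : H, Real.sqrt ((inner ℂ ((Complex.exp (θ * Complex.I) • T12
        + Complex.exp (-(θ * Complex.I)) • T21s) x)
        (A ((Complex.exp (θ * Complex.I) • T12
        + Complex.exp (-(θ * Complex.I)) • T21s) x)) : ℂ)).re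
        = ‖(Complex.exp ((θ:ℂ) * Complex.I) • P
            + Complex.exp (-((θ:ℂ) * Complex.I)) • Q) x‖ := by
      intro x
      rw [hnormsq, Complex.ofReal_re, hRtS, Real.sqrt_sq (norm_nonneg _)]
    have hden : ∀ x : H, Real.sqrt ((inner ℂ x (A x) : ℂ)).re = ‖Rt x‖ := by
      intro x
      rw [hnormsq, Complex.ofReal_re, Real.sqrt_sq (norm_nonneg _)]
    ext r
    simp only [Set.mem_setOf_eq, hcl, Set.mem_univ, true_and]
    constructor
    · rintro ⟨x, hx0, rfl⟩
      exact ⟨x, hx0, by rw [hnum, hden]⟩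
    · rintro ⟨b, hb0, rfl⟩
      exact ⟨b, hb0, by rw [hnum, hden]⟩
  -- finish
  have h1 : wA B T = sSup {r : ℝ | ∃ a b : H, ‖Rt a‖ ^ 2 + ‖Rt b‖ ^ 2 = 1 ∧
      r = ‖(inner ℂ (Rt a) (P b) : ℂ) + (starRingEnd ℂ) (inner ℂ (Rt a) (Q b))‖} := by
    rw [wA, hWeq]
  have h2 : ∀ θ : ℝ, normA A (Complex.exp (θ * Complex.I) • T12
      + Complex.exp (-(θ * Complex.I)) • T21s)
      = sSup {r : ℝ | ∃ b : H, b ≠ 0 ∧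
          r = ‖(Complex.exp ((θ:ℂ) * Complex.I) • P
              + Complex.exp (-((θ:ℂ) * Complex.I)) • Q) b‖ / ‖Rt b‖} := by
    intro θ
    rw [normA, hNeq θ]
  rw [h1]
  simp only [h2]
  exact WBaux_key Rt P Q hd hinj (Real.sqrt_nonneg _) hQb
end

section
/- Let A > 0, B = diag(A,A), T₁₂, T₂₁ admitting A-adjoints, T = [[0, T₁₂],[T₂₁, 0]]. Then w_B(T) ≤ (1/2)√(‖T₁₂^{♯}T₁₂ + T₂₁T₂₁^{♯}‖_A + 2 w_A(T₂₁T₁₂)). -/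
open scoped ComplexOrder

section aux
variable {H : Type*} [NormedAddCommGroup H] [InnerProductSpace ℂ H] [CompleteSpace H]

local notation "⟪" x ", " y "⟫" => @inner ℂ _ _ x y

/-- A-symmetry from strict positivity. -/
lemma aSym (A : H →L[ℂ] H) (hA : ∀ x : H, x ≠ 0 → 0 < (inner ℂ x (A x) : ℂ)) :
    ∀ x y : H, (inner ℂ (A x) y : ℂ) = inner ℂ x (A y) := by
  have hsymm : LinearMap.IsSymmetric (A : H →ₗ[ℂ] H) := by
    rw [LinearMap.isSymmetric_iff_inner_map_self_real]
    intro v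
    by_cases hv : v = 0
    · simp [hv]
    · have h := hA v hv
      rw [Complex.lt_def] at h
      have him : (inner ℂ v (A v) : ℂ).im = 0 := h.2.symm
      have h1 : (inner ℂ ((A : H →ₗ[ℂ] H) v) v : ℂ) = starRingEnd ℂ (inner ℂ v (A v) : ℂ) :=
        (inner_conj_symm _ v).symm
      rw [Complex.conj_eq_iff_im, h1]
      simpa only [Complex.conj_im, neg_eq_zero] using him
  exact fun x y => hsymm x y

lemma aReCast (A : H →L[ℂ] H) (hA : ∀ x : H, x ≠ 0 → 0 < (inner ℂ x (A x) : ℂ)) (x : H) :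
    (inner ℂ x (A x) : ℂ) = (((inner ℂ x (A x) : ℂ)).re : ℂ) := by
  by_cases hx : x = 0
  · simp [hx]
  · have h := hA x hx
    rw [Complex.lt_def] at h
    exact (Complex.re_add_im _).symm.trans (by rw [← h.2]; simp)

lemma aReNonneg (A : H →L[ℂ] H) (hA : ∀ x : H, x ≠ 0 → 0 < (inner ℂ x (A x) : ℂ)) (x : H) :
    0 ≤ (inner ℂ x (A x) : ℂ).re := by
  by_cases hx : x = 0
  · simp [hx]
  · have h := hA x hx
    rw [Complex.lt_def] at h
    exact le_of_lt (by simpa using h.1)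

/-- The pre-inner-product core given by A. -/
noncomputable def coreA (A : H →L[ℂ] H) (hA : ∀ x : H, x ≠ 0 → 0 < (inner ℂ x (A x) : ℂ)) :
    PreInnerProductSpace.Core ℂ H where
  inner x y := inner ℂ x (A y)
  conj_inner_symm x y := by
    show starRingEnd ℂ (inner ℂ y (A x) : ℂ) = inner ℂ x (A y)
    rw [inner_conj_symm]
    exact aSym A hA x y
  re_inner_nonneg x := by simpa using aReNonneg A hA x
  add_left x y z := inner_add_left _ _ _
  smul_left x y r := inner_smul_left _ _ _

noncomputable def pA (A : H →L[ℂ] H) (x : H) : ℝ := Real.sqrt ((inner ℂ x (A x) : ℂ)).re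

/-- Cauchy–Schwarz for the A-inner product. -/
lemma aCS (A : H →L[ℂ] H) (hA : ∀ x : H, x ≠ 0 → 0 < (inner ℂ x (A x) : ℂ)) (x y : H) :
    ‖(inner ℂ x (A y) : ℂ)‖ ≤ pA A x * pA A y := by
  have := @InnerProductSpace.Core.norm_inner_le_norm ℂ H _ _ _ (coreA A hA) x y
  exact this


lemma pA_nonneg (A : H →L[ℂ] H) (x : H) : 0 ≤ pA A x := Real.sqrt_nonneg _

lemma pA_sq (A : H →L[ℂ] H) (hA : ∀ x : H, x ≠ 0 → 0 < (inner ℂ x (A x) : ℂ)) (x : H) :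
    pA A x ^ 2 = ((inner ℂ x (A x) : ℂ)).re := Real.sq_sqrt (aReNonneg A hA x)

lemma pA_pos (A : H →L[ℂ] H) (hA : ∀ x : H, x ≠ 0 → 0 < (inner ℂ x (A x) : ℂ)) {x : H}
    (hx : x ≠ 0) : 0 < pA A x := by
  have h := hA x hx
  rw [Complex.lt_def] at h
  exact Real.sqrt_pos.mpr (by simpa using h.1)

lemma re_le_pA_mul (A : H →L[ℂ] H) (hA : ∀ x : H, x ≠ 0 → 0 < (inner ℂ x (A x) : ℂ)) (x y : H) :
    ((inner ℂ x (A y) : ℂ)).re ≤ pA A x * pA A y :=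
  le_trans (Complex.re_le_norm _) (by exact aCS A hA x y)

lemma pA_le_norm (A : H →L[ℂ] H) (x : H) : pA A x ≤ Real.sqrt ‖A‖ * ‖x‖ := by
  have h1 : ((inner ℂ x (A x) : ℂ)).re ≤ ‖A‖ * ‖x‖ ^ 2 := by
    calc ((inner ℂ x (A x) : ℂ)).re ≤ ‖(inner ℂ x (A x) : ℂ)‖ :=
          le_trans (Complex.re_le_norm _) le_rfl
      _ ≤ ‖x‖ * ‖A x‖ := norm_inner_le_norm x (A x)
      _ ≤ ‖x‖ * (‖A‖ * ‖x‖) := by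
          gcongr
          exact A.le_opNorm x
      _ = ‖A‖ * ‖x‖ ^ 2 := by ring
  calc pA A x ≤ Real.sqrt (‖A‖ * ‖x‖ ^ 2) := Real.sqrt_le_sqrt h1
    _ = Real.sqrt ‖A‖ * ‖x‖ := by
        rw [Real.sqrt_mul (norm_nonneg A), Real.sqrt_sq (norm_nonneg x)]

/-- moving an A-selfadjoint operator across the A-inner ℂ product -/
lemma aMove (A : H →L[ℂ] H) (P : H →L[ℂ] H)
    (hP : A.comp P = (ContinuousLinearMap.adjoint P).comp A) (z w : H) :
    (inner ℂ z (A (P w)) : ℂ) = inner ℂ (P z) (A w) := by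
  have hw : A (P w) = ContinuousLinearMap.adjoint P (A w) := by
    have := ContinuousLinearMap.ext_iff.mp hP w
    simpa using this
  rw [hw, ContinuousLinearMap.adjoint_inner_right]

lemma aMovePow (A : H →L[ℂ] H) (P : H →L[ℂ] H)
    (hP : A.comp P = (ContinuousLinearMap.adjoint P).comp A) (k : ℕ) (z w : H) :
    (inner ℂ z (A ((P ^ k) w)) : ℂ) = inner ℂ ((P ^ k) z) (A w) := by
  induction k generalizing w with
  | zero => simp
  | succ n ih =>
      have h1 : (P ^ (n + 1)) w = (P ^ n) (P w) := by
        rw [pow_succ]; rfl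
      have h2 : (P ^ (n + 1)) z = P ((P ^ n) z) := by
        rw [pow_succ']; rfl
      rw [h1, ih (P w), aMove A P hP, h2]

lemma aStep (A : H →L[ℂ] H) (hA : ∀ x : H, x ≠ 0 → 0 < (inner ℂ x (A x) : ℂ))
    (P : H →L[ℂ] H) (hP : A.comp P = (ContinuousLinearMap.adjoint P).comp A) (k : ℕ) (x : H) :
    pA A ((P ^ k) x) ^ 2 ≤ pA A x * pA A ((P ^ (2 * k)) x) := by
  have h1 : (inner ℂ ((P ^ k) x) (A ((P ^ k) x)) : ℂ) = inner ℂ x (A ((P ^ (2 * k)) x)) := by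
    rw [two_mul, pow_add]
    have : (P ^ k * P ^ k) x = (P ^ k) ((P ^ k) x) := rfl
    rw [this, aMovePow A P hP k x ((P ^ k) x)]
  rw [pA_sq A hA, h1]
  exact re_le_pA_mul A hA x ((P ^ (2 * k)) x)

lemma aChain (A : H →L[ℂ] H) (hA : ∀ x : H, x ≠ 0 → 0 < (inner ℂ x (A x) : ℂ))
    (P : H →L[ℂ] H) (hP : A.comp P = (ContinuousLinearMap.adjoint P).comp A) (x : H)
    (hx : x ≠ 0) (n : ℕ) :
    pA A (P x) ^ (2 ^ n) * pA A x ≤ pA A ((P ^ (2 ^ n)) x) * pA A x ^ (2 ^ n) := by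
  induction n with
  | zero => simp
  | succ n ih =>
      have hq0 : 0 < pA A x := pA_pos A hA hx
      have hsq := mul_le_mul ih ih
        (mul_nonneg (pow_nonneg (pA_nonneg A _) _) (pA_nonneg A _))
        (mul_nonneg (pA_nonneg A _) (pow_nonneg (pA_nonneg A _) _))
      have hstep := aStep A hA P hP (2 ^ n) x
      have h2 : (2 : ℕ) * 2 ^ n = 2 ^ (n + 1) := by ring
      rw [h2] at hstep
      have key : pA A (P x) ^ (2 ^ (n + 1)) * (pA A x * pA A x) ≤
          (pA A x * pA A ((P ^ (2 ^ (n + 1))) x)) * pA A x ^ (2 ^ (n + 1)) := by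
        calc pA A (P x) ^ (2 ^ (n + 1)) * (pA A x * pA A x)
            = (pA A (P x) ^ (2 ^ n) * pA A x) * (pA A (P x) ^ (2 ^ n) * pA A x) := by
              rw [pow_succ]; ring
          _ ≤ (pA A ((P ^ (2 ^ n)) x) * pA A x ^ (2 ^ n)) *
              (pA A ((P ^ (2 ^ n)) x) * pA A x ^ (2 ^ n)) := hsq
          _ = pA A ((P ^ (2 ^ n)) x) ^ 2 * pA A x ^ (2 ^ (n + 1)) := by
              rw [pow_succ]; ring
          _ ≤ (pA A x * pA A ((P ^ (2 ^ (n + 1))) x)) * pA A x ^ (2 ^ (n + 1)) := by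
              apply mul_le_mul_of_nonneg_right hstep (by positivity)
      refine le_of_mul_le_mul_right ?_ hq0
      calc (pA A (P x) ^ 2 ^ (n + 1) * pA A x) * pA A x
          = pA A (P x) ^ 2 ^ (n + 1) * (pA A x * pA A x) := by ring
        _ ≤ pA A x * pA A ((P ^ 2 ^ (n + 1)) x) * pA A x ^ 2 ^ (n + 1) := key
        _ = (pA A ((P ^ 2 ^ (n + 1)) x) * pA A x ^ 2 ^ (n + 1)) * pA A x := by ring

/-- An A-selfadjoint operator satisfies `pA (P x) ≤ ‖P‖ * pA x`. -/
lemma pA_bound (A : H →L[ℂ] H) (hA : ∀ x : H, x ≠ 0 → 0 < (inner ℂ x (A x) : ℂ))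
    (P : H →L[ℂ] H) (hP : A.comp P = (ContinuousLinearMap.adjoint P).comp A) (x : H) :
    pA A (P x) ≤ ‖P‖ * pA A x := by
  by_cases hx : x = 0
  · simp [hx, pA]
  by_cases hPn : ‖P‖ = 0
  · have : P = 0 := by rwa [norm_eq_zero] at hPn
    simp [this, hPn, pA]
  have hq0 : 0 < pA A x := pA_pos A hA hx
  have hPpos : 0 < ‖P‖ := lt_of_le_of_ne (norm_nonneg _) (Ne.symm hPn)
  by_contra hcon
  push_neg at hcon
  set r : ℝ := pA A (P x) / (‖P‖ * pA A x) with hr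
  have hr1 : 1 < r := (one_lt_div (by positivity)).mpr hcon
  set C : ℝ := Real.sqrt ‖A‖ * ‖x‖ / pA A x with hC
  have hrn : ∀ n : ℕ, r ^ n ≤ C := by
    intro n
    have hchain := aChain A hA P hP x hx n
    have hQ : pA A ((P ^ (2 ^ n)) x) ≤ Real.sqrt ‖A‖ * (‖P‖ ^ (2 ^ n) * ‖x‖) := by
      calc pA A ((P ^ (2 ^ n)) x) ≤ Real.sqrt ‖A‖ * ‖(P ^ (2 ^ n)) x‖ := pA_le_norm A _
        _ ≤ Real.sqrt ‖A‖ * (‖P ^ (2 ^ n)‖ * ‖x‖) := by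
            gcongr
            exact ContinuousLinearMap.le_opNorm _ x
        _ ≤ Real.sqrt ‖A‖ * (‖P‖ ^ (2 ^ n) * ‖x‖) := by
            gcongr
            exact norm_pow_le' P (Nat.pos_of_ne_zero (by positivity))
    have h2n : pA A (P x) ^ (2 ^ n) * pA A x ≤
        Real.sqrt ‖A‖ * (‖P‖ ^ (2 ^ n) * ‖x‖) * pA A x ^ (2 ^ n) := by
      refine le_trans hchain ?_
      exact mul_le_mul_of_nonneg_right hQ (by positivity)
    have hpow : r ^ (2 ^ n) ≤ C := by
      rw [hr, hC, div_pow, div_le_div_iff₀ (by positivity) hq0, mul_pow]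
      calc pA A (P x) ^ 2 ^ n * pA A x ≤
          Real.sqrt ‖A‖ * (‖P‖ ^ (2 ^ n) * ‖x‖) * pA A x ^ (2 ^ n) := h2n
        _ = Real.sqrt ‖A‖ * ‖x‖ * (‖P‖ ^ 2 ^ n * pA A x ^ 2 ^ n) := by ring
    refine le_trans ?_ hpow
    exact pow_le_pow_right₀ (le_of_lt hr1) (le_of_lt Nat.lt_two_pow_self)
  obtain ⟨n, hn⟩ := pow_unbounded_of_one_lt C hr1
  exact absurd (hrn n) (not_le.mpr hn)

lemma aAdj (A : H →L[ℂ] H) (hA : ∀ x : H, x ≠ 0 → 0 < (inner ℂ x (A x) : ℂ)) :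
    A = ContinuousLinearMap.adjoint A :=
  (ContinuousLinearMap.eq_adjoint_iff A A).mpr (fun x y => aSym A hA x y)

lemma pA_bound' (A : H →L[ℂ] H) (hA : ∀ x : H, x ≠ 0 → 0 < (inner ℂ x (A x) : ℂ))
    (R Rs : H →L[ℂ] H) (hR : A.comp Rs = (ContinuousLinearMap.adjoint R).comp A) (x : H) :
    pA A (R x) ≤ Real.sqrt ‖Rs.comp R‖ * pA A x := by
  have hAdj : A = ContinuousLinearMap.adjoint A := aAdj A hA
  have hRs' : (ContinuousLinearMap.adjoint Rs).comp A = A.comp R := by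
    have h := congrArg ContinuousLinearMap.adjoint hR
    rw [ContinuousLinearMap.adjoint_comp, ContinuousLinearMap.adjoint_comp,
      ContinuousLinearMap.adjoint_adjoint, ← hAdj] at h
    exact h
  have hcomp : A.comp (Rs.comp R) =
      (ContinuousLinearMap.adjoint (Rs.comp R)).comp A := by
    rw [ContinuousLinearMap.adjoint_comp]
    ext z
    have e1 : A (Rs (R z)) = (ContinuousLinearMap.adjoint R) (A (R z)) := by
      have := ContinuousLinearMap.ext_iff.mp hR (R z); simpa using this
    have e2 : (ContinuousLinearMap.adjoint Rs) (A z) = A (R z) := by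
      have := ContinuousLinearMap.ext_iff.mp hRs' z; simpa using this
    simp only [ContinuousLinearMap.comp_apply]
    rw [e1, e2]
  have hq : pA A (R x) ^ 2 ≤ ‖Rs.comp R‖ * pA A x ^ 2 := by
    have h1 : (inner ℂ (R x) (A (R x)) : ℂ) = inner ℂ x (A ((Rs.comp R) x)) := by
      have e1 : A ((Rs.comp R) x) = (ContinuousLinearMap.adjoint R) (A (R x)) := by
        have := ContinuousLinearMap.ext_iff.mp hR (R x)
        simpa using this
      rw [e1, ContinuousLinearMap.adjoint_inner_right]
    rw [pA_sq A hA, h1]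
    calc ((inner ℂ x (A ((Rs.comp R) x)) : ℂ)).re ≤ pA A x * pA A ((Rs.comp R) x) :=
          re_le_pA_mul A hA x ((Rs.comp R) x)
      _ ≤ pA A x * (‖Rs.comp R‖ * pA A x) :=
          mul_le_mul_of_nonneg_left (pA_bound A hA (Rs.comp R) hcomp x) (pA_nonneg A x)
      _ = ‖Rs.comp R‖ * pA A x ^ 2 := by ring
  calc pA A (R x) = Real.sqrt (pA A (R x) ^ 2) := (Real.sqrt_sq (pA_nonneg A _)).symm
    _ ≤ Real.sqrt (‖Rs.comp R‖ * pA A x ^ 2) := Real.sqrt_le_sqrt hq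
    _ = Real.sqrt ‖Rs.comp R‖ * pA A x := by
        rw [Real.sqrt_mul (norm_nonneg _), Real.sqrt_sq (pA_nonneg A _)]

lemma aDense (A : H →L[ℂ] H) (hA : ∀ x : H, x ≠ 0 → 0 < (inner ℂ x (A x) : ℂ)) (z : H) :
    z ∈ closure (Set.range ⇑A) := by
  have h : (LinearMap.range (A : H →ₗ[ℂ] H)).topologicalClosure = ⊤ := by
    rw [Submodule.topologicalClosure_eq_top_iff, Submodule.eq_bot_iff]
    intro v hv
    by_contra hv0
    have h1 : (inner ℂ ((A : H →ₗ[ℂ] H) v) v : ℂ) = 0 :=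
      hv ((A : H →ₗ[ℂ] H) v) (LinearMap.mem_range_self _ v)
    have h2 := hA v hv0
    have h3 : (inner ℂ (A v) v : ℂ) = 0 := h1
    rw [aSym A hA] at h3
    rw [h3] at h2
    exact lt_irrefl 0 h2
  have hz : z ∈ (LinearMap.range (A : H →ₗ[ℂ] H)).topologicalClosure := by
    rw [h]; trivial
  have : z ∈ closure ((LinearMap.range (A : H →ₗ[ℂ] H) : Submodule ℂ H) : Set H) := by
    rw [← Submodule.topologicalClosure_coe]
    exact hz
  rw [LinearMap.coe_range] at this; exact this

lemma normA_nonneg (A S : H →L[ℂ] H) : 0 ≤ normA A S := by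
  apply Real.sSup_nonneg
  rintro r ⟨x, -, -, rfl⟩
  positivity

lemma wA_nonneg_s15 (A R : H →L[ℂ] H) : 0 ≤ wA A R := by
  apply Real.sSup_nonneg
  rintro r ⟨x, -, rfl⟩
  positivity

lemma inner_S_le (A : H →L[ℂ] H) (hA : ∀ x : H, x ≠ 0 → 0 < (inner ℂ x (A x) : ℂ))
    (S : H →L[ℂ] H) (hS : A.comp S = (ContinuousLinearMap.adjoint S).comp A) (x : H) :
    ((inner ℂ x (A (S x)) : ℂ)).re ≤ normA A S * ((inner ℂ x (A x) : ℂ)).re := by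
  by_cases hx : x = 0
  · simp [hx]
  have hb : BddAbove {r : ℝ | ∃ y ∈ closure (Set.range ⇑A), y ≠ 0 ∧
      r = Real.sqrt ((inner ℂ (S y) (A (S y)) : ℂ)).re / Real.sqrt ((inner ℂ y (A y) : ℂ)).re} := by
    refine ⟨‖S‖, ?_⟩
    rintro r ⟨y, -, hy0, rfl⟩
    have hpy : 0 < pA A y := pA_pos A hA hy0
    show pA A (S y) / pA A y ≤ ‖S‖
    rw [div_le_iff₀ hpy]
    exact pA_bound A hA S hS y
  have hmem : pA A (S x) / pA A x ∈ {r : ℝ | ∃ y ∈ closure (Set.range ⇑A), y ≠ 0 ∧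
      r = Real.sqrt ((inner ℂ (S y) (A (S y)) : ℂ)).re / Real.sqrt ((inner ℂ y (A y) : ℂ)).re} :=
    ⟨x, aDense A hA x, hx, rfl⟩
  have hle : pA A (S x) / pA A x ≤ normA A S := le_csSup hb hmem
  have hpx : 0 < pA A x := pA_pos A hA hx
  calc ((inner ℂ x (A (S x)) : ℂ)).re ≤ pA A x * pA A (S x) := re_le_pA_mul A hA x (S x)
    _ = (pA A (S x) / pA A x) * pA A x ^ 2 := by field_simp
    _ ≤ normA A S * pA A x ^ 2 :=
        mul_le_mul_of_nonneg_right hle (by positivity)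
    _ = normA A S * ((inner ℂ x (A x) : ℂ)).re := by rw [pA_sq A hA]

lemma inner_R_le (A : H →L[ℂ] H) (hA : ∀ x : H, x ≠ 0 → 0 < (inner ℂ x (A x) : ℂ))
    (R Rs : H →L[ℂ] H) (hR : A.comp Rs = (ContinuousLinearMap.adjoint R).comp A) (x : H) :
    ‖(inner ℂ x (A (R x)) : ℂ)‖ ≤ wA A R * ((inner ℂ x (A x) : ℂ)).re := by
  by_cases hx : x = 0
  · simp [hx]
  set s : ℝ := ((inner ℂ x (A x) : ℂ)).re with hs_def
  have hs : 0 < s := by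
    have h := hA x hx
    rw [Complex.lt_def] at h
    simpa using h.1
  set μ : ℂ := (((Real.sqrt s)⁻¹ : ℝ) : ℂ) with hμ
  set y : H := μ • x with hy_def
  have hconj : (starRingEnd ℂ) μ * μ = ((s⁻¹ : ℝ) : ℂ) := by
    rw [hμ, Complex.conj_ofReal, ← Complex.ofReal_mul, ← mul_inv, Real.mul_self_sqrt hs.le]
  have hxr : (inner ℂ x (A x) : ℂ) = ((s : ℝ) : ℂ) := aReCast A hA x
  have hy : (inner ℂ y (A y) : ℂ) = 1 := by
    have hy1 : (inner ℂ y (A y) : ℂ) = ((starRingEnd ℂ) μ * μ) * inner ℂ x (A x) := by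
      rw [hy_def, map_smul, inner_smul_left, inner_smul_right]; ring
    rw [hy1, hconj, hxr, ← Complex.ofReal_mul, inv_mul_cancel₀ (ne_of_gt hs),
      Complex.ofReal_one]
  have hval : ‖(inner ℂ y (A (R y)) : ℂ)‖ = s⁻¹ * ‖(inner ℂ x (A (R x)) : ℂ)‖ := by
    have h1 : (inner ℂ y (A (R y)) : ℂ) = ((starRingEnd ℂ) μ * μ) * inner ℂ x (A (R x)) := by
      rw [hy_def, map_smul, map_smul, inner_smul_left, inner_smul_right]; ring
    rw [h1, hconj, norm_mul, Complex.norm_real, Real.norm_eq_abs,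
      abs_of_nonneg (inv_nonneg.mpr hs.le)]
  have hb : BddAbove {r : ℝ | ∃ z : H, (inner ℂ z (A z) : ℂ) = 1 ∧
      r = ‖(inner ℂ z (A (R z)) : ℂ)‖} := by
    refine ⟨Real.sqrt ‖Rs.comp R‖, ?_⟩
    rintro r ⟨z, hz1, rfl⟩
    have hz2 : ((inner ℂ z (A z) : ℂ)).re = 1 := by rw [hz1]; simp
    calc ‖(inner ℂ z (A (R z)) : ℂ)‖ ≤ pA A z * pA A (R z) := aCS A hA z (R z)
      _ ≤ pA A z * (Real.sqrt ‖Rs.comp R‖ * pA A z) :=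
          mul_le_mul_of_nonneg_left (pA_bound' A hA R Rs hR z) (pA_nonneg A z)
      _ = Real.sqrt ‖Rs.comp R‖ * pA A z ^ 2 := by ring
      _ = Real.sqrt ‖Rs.comp R‖ := by rw [pA_sq A hA, hz2, mul_one]
  have hmem : ‖(inner ℂ y (A (R y)) : ℂ)‖ ∈ {r : ℝ | ∃ z : H, (inner ℂ z (A z) : ℂ) = 1 ∧
      r = ‖(inner ℂ z (A (R z)) : ℂ)‖} := ⟨y, hy, rfl⟩
  have hle : ‖(inner ℂ y (A (R y)) : ℂ)‖ ≤ wA A R := le_csSup hb hmem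
  rw [hval] at hle
  calc ‖(inner ℂ x (A (R x)) : ℂ)‖ = s * (s⁻¹ * ‖(inner ℂ x (A (R x)) : ℂ)‖) := by
        field_simp
    _ ≤ s * wA A R := mul_le_mul_of_nonneg_left hle hs.le
    _ = wA A R * s := by ring

lemma phase_conj_mul (c : ℂ) :
    (starRingEnd ℂ) (if c = 0 then 1 else (‖c‖ : ℂ) / c) *
      (if c = 0 then 1 else (‖c‖ : ℂ) / c) = 1 := by
  by_cases h : c = 0
  · simp [h]
  · rw [if_neg h, map_div₀, Complex.conj_ofReal, div_mul_div_comm, RCLike.conj_mul, ← sq]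
    exact div_self (by
      rw [← Complex.ofReal_pow]
      exact Complex.ofReal_ne_zero.mpr (pow_ne_zero 2 (norm_ne_zero_iff.mpr h)))

lemma phase_mul (c : ℂ) :
    (if c = 0 then 1 else (‖c‖ : ℂ) / c) * c = (‖c‖ : ℂ) := by
  by_cases h : c = 0
  · simp [h]
  · rw [if_neg h, div_mul_cancel₀ _ h]

end aux


set_option maxHeartbeats 1000000 in
/-- For `A > 0`, `B = diag(A,A)` and `T = [[0,T₁₂],[T₂₁,0]]` on `H ⊕ H`:
`w_B(T) ≤ (1/2)√(‖T₁₂^♯T₁₂ + T₂₁T₂₁^♯‖_A + 2 w_A(T₂₁T₁₂))`. -/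
theorem wB_offdiag_upper {H : Type*} [NormedAddCommGroup H] [InnerProductSpace ℂ H]
    [CompleteSpace H] (A T12 T21 T12s T21s : H →L[ℂ] H)
    (hA : ∀ x : H, x ≠ 0 → 0 < (inner ℂ x (A x) : ℂ))
    (hT12s : A.comp T12s = (ContinuousLinearMap.adjoint T12).comp A)
    (hT21s : A.comp T21s = (ContinuousLinearMap.adjoint T21).comp A)
    (B T : (PiLp 2 fun _ : Fin 2 => H) →L[ℂ] (PiLp 2 fun _ : Fin 2 => H))
    (hB : ∀ x i, B x i = A (x i))
    (hT : ∀ x, T x 0 = T12 (x 1) ∧ T x 1 = T21 (x 0)) :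
    wA B T ≤ (1/2) * Real.sqrt (normA A (T12s * T12 + T21 * T21s) + 2 * wA A (T21 * T12)) := by
  classical
  set S : H →L[ℂ] H := T12s * T12 + T21 * T21s with hS_def
  set R : H →L[ℂ] H := T21 * T12 with hR_def
  set N : ℝ := normA A S with hN_def
  set W : ℝ := wA A R with hW_def
  have hN0 : 0 ≤ N := normA_nonneg A S
  have hW0 : 0 ≤ W := wA_nonneg_s15 A R
  have hAdj : A = ContinuousLinearMap.adjoint A := aAdj A hA
  -- pointwise adjoint identities
  have e12 : ∀ z, A (T12s z) = (ContinuousLinearMap.adjoint T12) (A z) := by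
    intro z; have := ContinuousLinearMap.ext_iff.mp hT12s z; simpa using this
  have e21 : ∀ z, A (T21s z) = (ContinuousLinearMap.adjoint T21) (A z) := by
    intro z; have := ContinuousLinearMap.ext_iff.mp hT21s z; simpa using this
  have hrev : ∀ (U Us : H →L[ℂ] H), A.comp Us = (ContinuousLinearMap.adjoint U).comp A →
      ∀ z, (ContinuousLinearMap.adjoint Us) (A z) = A (U z) := by
    intro U Us hU z
    have h := congrArg ContinuousLinearMap.adjoint hU
    rw [ContinuousLinearMap.adjoint_comp, ContinuousLinearMap.adjoint_comp,
      ContinuousLinearMap.adjoint_adjoint, ← hAdj] at h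
    have := ContinuousLinearMap.ext_iff.mp h z
    simpa using this
  have f12 : ∀ z, (ContinuousLinearMap.adjoint T12s) (A z) = A (T12 z) := hrev T12 T12s hT12s
  have f21 : ∀ z, (ContinuousLinearMap.adjoint T21s) (A z) = A (T21 z) := hrev T21 T21s hT21s
  -- S is A-selfadjoint
  have hS : A.comp S = (ContinuousLinearMap.adjoint S).comp A := by
    ext z
    simp only [ContinuousLinearMap.comp_apply, hS_def, ContinuousLinearMap.add_apply,
      ContinuousLinearMap.mul_apply, map_add, ContinuousLinearMap.adjoint_comp]
    rw [e12 (T12 z)]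
    have h2 : A (T21 (T21s z)) = (ContinuousLinearMap.adjoint T21s) (A (T21s z)) :=
      (f21 (T21s z)).symm
    rw [h2, e21 z]
    rw [ContinuousLinearMap.mul_def T12s T12, ContinuousLinearMap.mul_def T21 T21s,
      ContinuousLinearMap.adjoint_comp, ContinuousLinearMap.adjoint_comp]
    simp only [ContinuousLinearMap.comp_apply]
    rw [f12 z]
  -- R has A-adjoint Rs
  have hR : A.comp (T12s.comp T21s) = (ContinuousLinearMap.adjoint R).comp A := by
    ext z
    simp only [ContinuousLinearMap.comp_apply, hR_def]
    rw [e12 (T21s z), e21 z]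
    rw [ContinuousLinearMap.mul_def T21 T12, ContinuousLinearMap.adjoint_comp]
    rfl
  apply Real.sSup_le _ (by positivity)
  rintro r ⟨x, hx1, rfl⟩
  rw [PiLp.inner_apply, Fin.sum_univ_two, hB x 0, hB x 1] at hx1
  set t : ℝ := ((inner ℂ (x 0) (A (x 0)) : ℂ)).re with ht_def
  set s : ℝ := ((inner ℂ (x 1) (A (x 1)) : ℂ)).re with hs_def
  have ht0 : 0 ≤ t := aReNonneg A hA (x 0)
  have hs0 : 0 ≤ s := aReNonneg A hA (x 1)
  have hts : t + s = 1 := by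
    have := congrArg Complex.re hx1
    simpa [Complex.add_re] using this
  set u : H := T12 (x 1) with hu_def
  set w : H := T21s (x 1) with hw_def
  set a' : ℂ := inner ℂ (x 0) (A u) with ha_def
  set b' : ℂ := inner ℂ (x 0) (A w) with hb_def
  -- the numerical value
  have hgoal : (inner ℂ x (B (T x)) : ℂ) = a' + (starRingEnd ℂ) b' := by
    rw [PiLp.inner_apply, Fin.sum_univ_two, hB (T x) 0, hB (T x) 1, (hT x).1, (hT x).2]
    congr 1
    -- ⟪x 1, A (T21 (x 0))⟫ = conj b'
    have h1 : A (T21 (x 0)) = (ContinuousLinearMap.adjoint T21s) (A (x 0)) := (f21 (x 0)).symm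
    rw [h1, ContinuousLinearMap.adjoint_inner_right]
    rw [hb_def, ← inner_conj_symm]
    rw [aSym A hA]
  -- phases
  set α : ℂ := if a' = 0 then 1 else (‖a'‖ : ℂ) / a' with hα_def
  set β : ℂ := if b' = 0 then 1 else (‖b'‖ : ℂ) / b' with hβ_def
  have hα1 : (starRingEnd ℂ) α * α = 1 := phase_conj_mul a'
  have hβ1 : (starRingEnd ℂ) β * β = 1 := phase_conj_mul b'
  have hαa : α * a' = (‖a'‖ : ℂ) := phase_mul a'
  have hβb : β * b' = (‖b'‖ : ℂ) := phase_mul b'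
  set z : H := α • u + β • w with hz_def
  have hz : (inner ℂ (x 0) (A z) : ℂ) = ((‖a'‖ + ‖b'‖ : ℝ) : ℂ) := by
    rw [hz_def, map_add, map_smul, map_smul, inner_add_right, inner_smul_right,
      inner_smul_right, ← ha_def, ← hb_def, hαa, hβb, Complex.ofReal_add]
  have hub : ‖a'‖ + ‖b'‖ ≤ pA A (x 0) * pA A z := by
    have h1 : ‖(inner ℂ (x 0) (A z) : ℂ)‖ = ‖a'‖ + ‖b'‖ := by
      rw [hz, Complex.norm_real, Real.norm_eq_abs]
      exact abs_of_nonneg (by positivity)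
    rw [← h1]
    exact aCS A hA (x 0) z
  have hwu : (inner ℂ w (A u) : ℂ) = (starRingEnd ℂ) (inner ℂ u (A w) : ℂ) := by
    rw [← aSym A hA w u]
    exact (inner_conj_symm (A w) u).symm
  have hexp : (inner ℂ z (A z) : ℂ) = inner ℂ u (A u) + inner ℂ w (A w) +
      (((starRingEnd ℂ) α * β) * inner ℂ u (A w) +
        (α * (starRingEnd ℂ) β) * (starRingEnd ℂ) (inner ℂ u (A w) : ℂ)) := by
    rw [hz_def]
    simp only [map_add, map_smul, inner_add_left, inner_add_right, inner_smul_left,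
      inner_smul_right, hwu]
    linear_combination (inner ℂ u (A u) : ℂ) * hα1 + (inner ℂ w (A w) : ℂ) * hβ1
  have hαn : ‖α‖ = 1 := by
    have h := congrArg norm hα1
    rw [norm_mul, RCLike.norm_conj, norm_one] at h
    nlinarith [norm_nonneg α]
  have hβn : ‖β‖ = 1 := by
    have h := congrArg norm hβ1
    rw [norm_mul, RCLike.norm_conj, norm_one] at h
    nlinarith [norm_nonneg β]
  have hzz : ((inner ℂ z (A z) : ℂ)).re ≤ ((inner ℂ u (A u) : ℂ)).re + ((inner ℂ w (A w) : ℂ)).re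
      + 2 * ‖(inner ℂ u (A w) : ℂ)‖ := by
    rw [hexp]
    simp only [Complex.add_re]
    have hconjeq : (α * (starRingEnd ℂ) β) * (starRingEnd ℂ) (inner ℂ u (A w) : ℂ) =
        (starRingEnd ℂ) (((starRingEnd ℂ) α * β) * inner ℂ u (A w)) := by
      rw [map_mul, map_mul, Complex.conj_conj]
    rw [hconjeq, Complex.conj_re]
    have hre : (((starRingEnd ℂ) α * β) * inner ℂ u (A w)).re ≤ ‖(inner ℂ u (A w) : ℂ)‖ := by
      calc (((starRingEnd ℂ) α * β) * inner ℂ u (A w)).re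
          ≤ ‖((starRingEnd ℂ) α * β) * (inner ℂ u (A w) : ℂ)‖ :=
            le_trans (Complex.re_le_norm _) le_rfl
        _ = ‖(inner ℂ u (A w) : ℂ)‖ := by
            rw [norm_mul, norm_mul, RCLike.norm_conj, hαn, hβn]; ring
    linarith
  have hsum : ((inner ℂ u (A u) : ℂ)).re + ((inner ℂ w (A w) : ℂ)).re =
      ((inner ℂ (x 1) (A (S (x 1))) : ℂ)).re := by
    have h1 : (inner ℂ (x 1) (A (S (x 1))) : ℂ) = inner ℂ u (A u) + inner ℂ w (A w) := by
      have hSx : S (x 1) = T12s (T12 (x 1)) + T21 (T21s (x 1)) := rfl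
      rw [hSx, map_add, inner_add_right]
      congr 1
      · rw [e12 (T12 (x 1)), ContinuousLinearMap.adjoint_inner_right]
      · rw [← f21 (T21s (x 1)), ContinuousLinearMap.adjoint_inner_right]
    rw [h1, Complex.add_re]
  have hcnorm : ‖(inner ℂ u (A w) : ℂ)‖ = ‖(inner ℂ (x 1) (A (R (x 1))) : ℂ)‖ := by
    have h1 : (inner ℂ u (A w) : ℂ) = inner ℂ (R (x 1)) (A (x 1)) := by
      rw [hu_def, hw_def, e21 (x 1), ContinuousLinearMap.adjoint_inner_right]
      rfl
    have h2 : (inner ℂ (R (x 1)) (A (x 1)) : ℂ) =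
        (starRingEnd ℂ) (inner ℂ (x 1) (A (R (x 1))) : ℂ) := by
      rw [← aSym A hA (x 1) (R (x 1))]
      exact (inner_conj_symm (R (x 1)) (A (x 1))).symm
    rw [h1, h2, RCLike.norm_conj]
  have hz2 : pA A z ^ 2 ≤ N * s + 2 * (W * s) := by
    rw [pA_sq A hA]
    refine le_trans hzz ?_
    rw [hsum, hcnorm]
    have h1 := inner_S_le A hA S hS (x 1)
    have h2 := inner_R_le A hA R (T12s.comp T21s) hR (x 1)
    rw [← hs_def] at h1 h2
    rw [← hN_def] at h1
    rw [← hW_def] at h2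
    linarith
  have hv : ‖a' + (starRingEnd ℂ) b'‖ ≤ pA A (x 0) * pA A z := by
    refine le_trans (norm_add_le _ _) ?_
    rw [RCLike.norm_conj]
    exact hub
  have hv2 : ‖a' + (starRingEnd ℂ) b'‖ ^ 2 ≤ t * (N * s + 2 * (W * s)) := by
    calc ‖a' + (starRingEnd ℂ) b'‖ ^ 2 ≤ (pA A (x 0) * pA A z) ^ 2 := by
          apply pow_le_pow_left₀ (norm_nonneg _) hv
      _ = pA A (x 0) ^ 2 * pA A z ^ 2 := by ring
      _ ≤ pA A (x 0) ^ 2 * (N * s + 2 * (W * s)) := by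
          apply mul_le_mul_of_nonneg_left hz2 (by positivity)
      _ = t * (N * s + 2 * (W * s)) := by rw [pA_sq A hA, ← ht_def]
  have hts4 : t * s ≤ 1 / 4 := by nlinarith [sq_nonneg (t - s)]
  have hfinal : ‖a' + (starRingEnd ℂ) b'‖ ^ 2 ≤ (1 / 4) * (N + 2 * W) := by
    calc ‖a' + (starRingEnd ℂ) b'‖ ^ 2 ≤ t * (N * s + 2 * (W * s)) := hv2
      _ = (t * s) * (N + 2 * W) := by ring
      _ ≤ (1 / 4) * (N + 2 * W) := mul_le_mul_of_nonneg_right hts4 (by positivity)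
  rw [hgoal]
  calc ‖a' + (starRingEnd ℂ) b'‖
      = Real.sqrt (‖a' + (starRingEnd ℂ) b'‖ ^ 2) := (Real.sqrt_sq (norm_nonneg _)).symm
    _ ≤ Real.sqrt ((1 / 4) * (N + 2 * W)) := Real.sqrt_le_sqrt hfinal
    _ = (1 / 2) * Real.sqrt (N + 2 * W) := by
        rw [show (1 / 4 : ℝ) = (1 / 2) ^ 2 by norm_num,
          Real.sqrt_mul (by positivity), Real.sqrt_sq (by norm_num)]
end
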